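/- arXiv:1008.3735 — 5 statements merged into one kernel-verified Lean document; each statement's English description precedes it below -/
import Mathlib

section
/- Let α0,α1,α2,α3,α4 be complex numbers with α0+α1+2α2+2α3+2α4=1. There is no solution (x,y,z,w) of the Sasano system B4(α0,α1,α2,α3,α4) on an annulus {|t|>R} such that all four functions x, y, z, w are holomorphic at t=∞ (i.e., each has a finite limit as t→∞). -/
open Filter Topology Polynomial

noncomputable section

/-- The four equations of the Sasano system of type `B₄⁽¹⁾` at the point `t`. -/
def B4Eqs (a0 a1 a2 a3 a4 : ℂ) (x y z w : ℂ → ℂ) (t : ℂ) : Prop :=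
  (t * deriv x t =
      2 * x t ^ 2 * y t - x t ^ 2 + (1 - 2*a2 - 2*a3 - 2*a4) * x t
        + 2 * a3 * z t + 2 * z t ^ 2 * w t + t) ∧
  (t * deriv y t =
      -2 * x t * y t ^ 2 + 2 * x t * y t - (1 - 2*a2 - 2*a3 - 2*a4) * y t + a1) ∧
  (t * deriv z t =
      2 * z t ^ 2 * w t - z t ^ 2 + (1 - 2*a4) * z t + 2 * y t * z t ^ 2 + t) ∧
  (t * deriv w t =
      -2 * z t * w t ^ 2 + 2 * z t * w t - (1 - 2*a4) * w t
        - 2 * a3 * y t - 4 * y t * z t * w t + a3)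

/-- `(x,y,z,w)` is a holomorphic solution of the Sasano system `B₄⁽¹⁾` on the set `s`. -/
def SolvesB4On (a0 a1 a2 a3 a4 : ℂ) (x y z w : ℂ → ℂ) (s : Set ℂ) : Prop :=
  ∀ t ∈ s, DifferentiableAt ℂ x t ∧ DifferentiableAt ℂ y t ∧
    DifferentiableAt ℂ z t ∧ DifferentiableAt ℂ w t ∧ B4Eqs a0 a1 a2 a3 a4 x y z w t

/-- The filter of neighbourhoods of `t = ∞` in `ℂ`. -/
def atInfty : Filter ℂ := Filter.comap (fun t : ℂ => ‖t‖) Filter.atTop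

/-- `f` is holomorphic at `t = ∞`: `f(t)` has a finite limit as `t → ∞`. -/
def HoloAtInfty (f : ℂ → ℂ) : Prop := ∃ L : ℂ, Tendsto f atInfty (𝓝 L)

/-- `f` has a pole of order `n ≥ 1` at `t = ∞`: `t⁻ⁿ·f(t)` has a finite nonzero limit
as `t → ∞`. -/
def PoleAtInftyOfOrder (f : ℂ → ℂ) (n : ℕ) : Prop :=
  ∃ L : ℂ, L ≠ 0 ∧ Tendsto (fun t => f t / t ^ n) atInfty (𝓝 L)

lemma eventually_atInfty {p : ℂ → Prop} :
    (∀ᶠ t in atInfty, p t) ↔ ∃ M : ℝ, ∀ t : ℂ, M ≤ ‖t‖ → p t := by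
  rw [atInfty, eventually_comap, eventually_atTop]
  constructor
  · rintro ⟨M, hM⟩
    exact ⟨M, fun t ht => hM ‖t‖ ht t rfl⟩
  · rintro ⟨M, hM⟩
    exact ⟨M, fun b hb t htb => hM t (htb ▸ hb)⟩

lemma tendsto_inv_atInfty : Tendsto (fun t : ℂ => t⁻¹) atInfty (𝓝 0) := by
  rw [tendsto_zero_iff_norm_tendsto_zero]
  have h : Tendsto (fun t : ℂ => ‖t‖) atInfty atTop := by
    rw [atInfty]; exact tendsto_comap
  simpa [norm_inv, Function.comp_def] using tendsto_inv_atTop_zero.comp h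

lemma tendsto_ofReal_atInfty : Tendsto (fun s : ℝ => (s : ℂ)) atTop atInfty := by
  rw [atInfty, tendsto_comap_iff]
  have h : ((fun t : ℂ => ‖t‖) ∘ fun s : ℝ => (s : ℂ)) = fun s : ℝ => |s| := by
    funext s; simp [Complex.norm_real]
  rw [h]
  exact tendsto_abs_atTop_atTop

/-- There is no solution of the Sasano system `B₄⁽¹⁾` on an annulus `{|t| > R}` such that
all four components `x, y, z, w` are holomorphic at `t = ∞`. -/
theorem B4_no_solution_all_holomorphic_at_infinity (a0 a1 a2 a3 a4 : ℂ)
    (hsum : a0 + a1 + 2*a2 + 2*a3 + 2*a4 = 1) (R : ℝ) (x y z w : ℂ → ℂ)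
    (hsol : SolvesB4On a0 a1 a2 a3 a4 x y z w {t : ℂ | R < ‖t‖}) :
    ¬ (HoloAtInfty x ∧ HoloAtInfty y ∧ HoloAtInfty z ∧ HoloAtInfty w) := by
  rintro ⟨⟨Lx, hLx⟩, ⟨Ly, hLy⟩, ⟨Lz, hLz⟩, ⟨Lw, hLw⟩⟩
  have hsol' : ∀ t ∈ {t : ℂ | R < ‖t‖}, DifferentiableAt ℂ x t ∧
      (t * deriv x t =
        2 * x t ^ 2 * y t - x t ^ 2 + (1 - 2*a2 - 2*a3 - 2*a4) * x t
          + 2 * a3 * z t + 2 * z t ^ 2 * w t + t) := by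
    intro t ht
    obtain ⟨hdx, _, _, _, heq⟩ := hsol t ht
    exact ⟨hdx, heq.1⟩
  have hGlim := ((((((hLx.pow 2).const_mul 2).mul hLy).sub (hLx.pow 2)).add
      (hLx.const_mul (1 - 2*a2 - 2*a3 - 2*a4))).add (hLz.const_mul (2*a3))).add
      (((hLz.pow 2).const_mul 2).mul hLw)
  have hNe : ∀ᶠ t in atInfty, (fun t : ℂ => (2 * x t ^ 2 * y t - x t ^ 2 + (1 - 2*a2 - 2*a3 - 2*a4) * x t
      + 2 * a3 * z t + 2 * z t ^ 2 * w t) * t⁻¹ + 1) t = deriv x t := by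
    rw [eventually_atInfty]
    refine ⟨max R 0 + 1, fun t ht => ?_⟩
    have htR : R < ‖t‖ := lt_of_le_of_lt (le_max_left R 0) (by linarith)
    have ht0 : t ≠ 0 := by
      intro h; rw [h, norm_zero] at ht
      have := le_max_right R 0; linarith
    obtain ⟨_, heq⟩ := hsol' t htR
    simp only
    field_simp
    linear_combination -heq
  have hderiv_lim : Tendsto (deriv x) atInfty (𝓝 1) := by
    have h1 := (hGlim.mul tendsto_inv_atInfty).add (tendsto_const_nhds (x := (1:ℂ)))
    rw [mul_zero, zero_add] at h1
    exact Tendsto.congr' hNe h1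
  have hhalf : ∀ᶠ t in atInfty, (1:ℝ)/2 < (deriv x t).re := by
    have hopen : IsOpen {u : ℂ | (1:ℝ)/2 < u.re} := isOpen_lt continuous_const Complex.continuous_re
    exact hderiv_lim.eventually (hopen.mem_nhds (by norm_num))
  obtain ⟨M1, hM1⟩ := eventually_atInfty.mp hhalf
  set S : ℝ := max (max M1 R) 0 + 1 with hSdef
  have hmax := le_max_left (max M1 R) 0
  have hmax0 := le_max_right (max M1 R) (0:ℝ)
  have hm1 := le_max_left M1 R
  have hmR := le_max_right M1 R
  have hS1 : (1:ℝ) ≤ S := by rw [hSdef]; linarith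
  have hnorm : ∀ s : ℝ, S ≤ s → ‖(s:ℂ)‖ = s := fun s hs => by
    rw [Complex.norm_real, Real.norm_eq_abs, abs_of_pos (by linarith)]
  have hSR : R < S := by rw [hSdef]; linarith
  have hSM1 : M1 < S := by rw [hSdef]; linarith
  -- real-axis function
  set k : ℝ → ℝ := fun s => (x ↑s).re - s/2 with hkdef
  have hk : ∀ s : ℝ, S ≤ s → HasDerivAt k ((deriv x ↑s).re - 1/2) s := by
    intro s hs
    have hsR : R < ‖(s:ℂ)‖ := by rw [hnorm s hs]; linarith
    have hdiff : DifferentiableAt ℂ x ↑s := (hsol' _ hsR).1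
    have h1 : HasDerivAt x (deriv x ↑s) ↑s := hdiff.hasDerivAt
    have h2 : HasDerivAt (fun σ : ℝ => (x ↑σ).re) (deriv x ↑s).re s := h1.real_of_complex
    exact h2.sub ((hasDerivAt_id s).div_const 2)
  have hmono : StrictMonoOn k (Set.Ici S) := by
    apply strictMonoOn_of_deriv_pos (convex_Ici S)
    · intro s hs
      exact (hk s hs).continuousAt.continuousWithinAt
    · intro s hs
      rw [interior_Ici] at hs
      have hs' : S < s := hs
      rw [(hk s (le_of_lt hs')).deriv]
      have : M1 ≤ ‖(s:ℂ)‖ := by rw [hnorm s (le_of_lt hs')]; linarith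
      linarith [hM1 _ this]
  have hgrow : ∀ s : ℝ, S ≤ s → k S + s/2 ≤ (x ↑s).re := by
    intro s hs
    have hkk : k S ≤ k s := hmono.monotoneOn (Set.self_mem_Ici (a := S)) (Set.mem_Ici.mpr hs) hs
    simp only [hkdef] at hkk ⊢
    linarith
  have hxlim : Tendsto (fun s : ℝ => (x ↑s).re) atTop (𝓝 Lx.re) :=
    (Complex.continuous_re.tendsto Lx).comp (hLx.comp tendsto_ofReal_atInfty)
  have htop : Tendsto (fun s : ℝ => (x ↑s).re) atTop atTop := by
    apply tendsto_atTop_mono' atTop (show ∀ᶠ s : ℝ in atTop, k S + s/2 ≤ (x ↑s).re from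
      eventually_atTop.mpr ⟨S, fun s hs => hgrow s hs⟩)
    exact tendsto_atTop_add_const_left _ _ (tendsto_id.atTop_div_const two_pos)
  exact not_tendsto_nhds_of_tendsto_atTop htop Lx.re hxlim
end
end

section
/- Let α0,α1,α2,α3,α4 be complex numbers with α0+α1+2α2+2α3+2α4=1, and let (x,y,z,w) be a solution of the Sasano system B4(α0,α1,α2,α3,α4) on an annulus {|t|>R} such that each of x,y,z,w has at worst a pole at t=∞. Then z has a pole at t=∞ of some order n ≥ 1, and x, y, w are all holomorphic at t=∞ (each has a finite limit as t→∞). -/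
open Filter Topology Polynomial

noncomputable section

/-- `f` has at worst a pole at `t = ∞`: `t⁻ᵐ·f(t) → 0` as `t → ∞` for some `m ≥ 0`. -/
def AtWorstPoleAtInfty (f : ℂ → ℂ) : Prop :=
  ∃ m : ℕ, Tendsto (fun t => f t / t ^ m) atInfty (𝓝 0)

namespace B4aux

lemma tendsto_norm_atInfty : Tendsto (fun t : ℂ => ‖t‖) atInfty atTop := tendsto_comap

instance : atInfty.NeBot := by
  rw [show atInfty = Filter.comap (fun t : ℂ => ‖t‖) Filter.atTop from rfl]
  apply Filter.comap_neBot
  intro s hs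
  obtain ⟨M, hM⟩ := mem_atTop_sets.1 hs
  exact ⟨((max M 0 : ℝ) : ℂ), hM _ (by simp [abs_of_nonneg (le_max_right M 0)])⟩

lemma ev_gt (M : ℝ) : ∀ᶠ t : ℂ in atInfty, M < ‖t‖ :=
  tendsto_norm_atInfty.eventually_gt_atTop M

lemma ev_ne : ∀ᶠ t : ℂ in atInfty, t ≠ 0 := by
  filter_upwards [ev_gt 0] with t ht
  exact fun h => by simp [h] at ht

lemma tendsto_inv0 : Tendsto (fun t : ℂ => t⁻¹) atInfty (𝓝 0) := by
  rw [tendsto_zero_iff_norm_tendsto_zero]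
  simp only [norm_inv]; exact tendsto_norm_atInfty.inv_tendsto_atTop

lemma tendsto_inv_nhdsNE : Tendsto (fun t : ℂ => t⁻¹) atInfty (𝓝[≠] (0 : ℂ)) := by
  rw [tendsto_nhdsWithin_iff]
  refine ⟨tendsto_inv0, ?_⟩
  filter_upwards [ev_ne] with t ht
  simp [Set.mem_compl_singleton_iff, inv_eq_zero, ht]

lemma tendsto_inv_punctured : Tendsto (fun u : ℂ => u⁻¹) (𝓝[≠] (0 : ℂ)) atInfty := by
  rw [show atInfty = Filter.comap (fun t : ℂ => ‖t‖) Filter.atTop from rfl,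
    tendsto_comap_iff]
  have h1 : Tendsto (fun u : ℂ => ‖u‖) (𝓝[≠] (0 : ℂ)) (𝓝[>] (0 : ℝ)) := by
    rw [tendsto_nhdsWithin_iff]
    constructor
    · exact (continuous_norm.tendsto' 0 0 (by simp)).mono_left nhdsWithin_le_nhds
    · filter_upwards [self_mem_nhdsWithin] with u hu
      simpa [Set.mem_Ioi] using norm_pos_iff.2 hu
  simpa [Function.comp_def, norm_inv] using tendsto_inv_nhdsGT_zero.comp h1

lemma tendsto_zpow_neg {k : ℤ} (hk : k < 0) : Tendsto (fun t : ℂ => t ^ k) atInfty (𝓝 0) := by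
  rw [tendsto_zero_iff_norm_tendsto_zero]
  simp only [norm_zpow]; exact (tendsto_zpow_atTop_zero hk).comp tendsto_norm_atInfty

/-- `f t / t^d → C` at infinity. -/
def Dom (f : ℂ → ℂ) (d : ℤ) (C : ℂ) : Prop :=
  Tendsto (fun t => f t / t ^ d) atInfty (𝓝 C)

namespace Dom

variable {f g : ℂ → ℂ} {d e : ℤ} {C D : ℂ}

lemma congr' (h : Dom f d C) (he : ∀ᶠ t in atInfty, f t = g t) : Dom g d C := by
  apply Filter.Tendsto.congr' _ h
  filter_upwards [he] with t ht
  rw [ht]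

lemma of_forall_eq (h : Dom f d C) (he : ∀ t, f t = g t) : Dom g d C :=
  h.congr' (Eventually.of_forall he)

lemma cast (h : Dom f d C) (hd : d = e) (hC : C = D) : Dom f e D := hd ▸ hC ▸ h

lemma unique (h1 : Dom f d C) (h2 : Dom f d D) : C = D := tendsto_nhds_unique h1 h2

lemma add (h1 : Dom f d C) (h2 : Dom g d D) : Dom (fun t => f t + g t) d (C + D) := by
  have := Filter.Tendsto.add h1 h2
  apply Tendsto.congr _ this
  intro t; simp [add_div]

lemma neg (h : Dom f d C) : Dom (fun t => -f t) d (-C) := by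
  have := Filter.Tendsto.neg h
  apply Tendsto.congr _ this
  intro t; simp [neg_div]

lemma sub (h1 : Dom f d C) (h2 : Dom g d D) : Dom (fun t => f t - g t) d (C - D) := by
  simpa [sub_eq_add_neg] using h1.add h2.neg

lemma const_mul (a : ℂ) (h : Dom f d C) : Dom (fun t => a * f t) d (a * C) := by
  have := Filter.Tendsto.const_mul a h
  apply Tendsto.congr _ this
  intro t; simp [mul_div_assoc]

lemma mul (h1 : Dom f d C) (h2 : Dom g e D) :
    Dom (fun t => f t * g t) (d + e) (C * D) := by
  have h : Tendsto (fun t => (f t / t ^ d) * (g t / t ^ e)) atInfty (𝓝 (C * D)) :=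
    Filter.Tendsto.mul h1 h2
  apply Filter.Tendsto.congr' _ h
  filter_upwards [ev_ne] with t ht
  rw [div_mul_div_comm, zpow_add₀ ht]

lemma shift (h : Dom f d C) {e : ℤ} (hde : d < e) : Dom f e 0 := by
  have h2 : Tendsto (fun t : ℂ => t ^ (d - e)) atInfty (𝓝 0) := tendsto_zpow_neg (by omega)
  have := Filter.Tendsto.mul (h : Tendsto _ _ _) h2
  apply Tendsto.congr' _ (by simpa using this)
  filter_upwards [ev_ne] with t ht
  rw [div_mul_eq_mul_div, div_eq_div_iff (zpow_ne_zero _ ht) (zpow_ne_zero _ ht),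
    mul_assoc, ← zpow_add₀ ht, sub_add_cancel]

lemma shift_le (h : Dom f d C) {e : ℤ} (hde : d < e ∨ (d = e ∧ C = 0)) : Dom f e 0 := by
  rcases hde with hde | ⟨rfl, rfl⟩
  · exact h.shift hde
  · exact h

lemma tendsto0 (h : Dom f 0 C) : Tendsto f atInfty (𝓝 C) := by
  have : (fun t : ℂ => f t / t ^ (0 : ℤ)) = f := by funext t; simp
  rwa [Dom, this] at h

lemma of_tendsto (h : Tendsto f atInfty (𝓝 C)) : Dom f 0 C := by
  have : (fun t : ℂ => f t / t ^ (0 : ℤ)) = f := by funext t; simp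
  rwa [Dom, this]

lemma tendsto_of_neg (h : Dom f d C) (hd : d < 0) : Tendsto f atInfty (𝓝 0) := by
  have h2 : Tendsto (fun t : ℂ => t ^ d) atInfty (𝓝 0) := tendsto_zpow_neg hd
  have := Filter.Tendsto.mul (h : Tendsto _ _ _) h2
  apply Tendsto.congr' _ (by simpa using this)
  filter_upwards [ev_ne] with t ht
  exact div_mul_cancel₀ _ (zpow_ne_zero _ ht)

end Dom

lemma dom_const (c : ℂ) : Dom (fun _ => c) 0 c := Dom.of_tendsto tendsto_const_nhds

lemma dom_zero_of_ev {f : ℂ → ℂ} (h : ∀ᶠ t in atInfty, f t = 0) (d : ℤ) : Dom f d 0 := by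
  rw [Dom]
  apply Tendsto.congr' _ (tendsto_const_nhds : Tendsto (fun _ : ℂ => (0:ℂ)) atInfty (𝓝 0))
  filter_upwards [h] with t ht
  simp [ht]

lemma dom_id : Dom (fun t => t) 1 1 := by
  rw [Dom]
  apply Tendsto.congr' _ (tendsto_const_nhds : Tendsto (fun _ : ℂ => (1:ℂ)) atInfty (𝓝 1))
  filter_upwards [ev_ne] with t ht
  simp [zpow_one, div_self ht]


/-- Normal form at infinity for a function holomorphic on an annulus with at worst a
pole at infinity. -/
lemma nf {f : ℂ → ℂ} {R : ℝ}
    (hdiff : ∀ t : ℂ, R < ‖t‖ → DifferentiableAt ℂ f t)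
    (hp : AtWorstPoleAtInfty f) :
    (∀ᶠ t in atInfty, f t = 0 ∧ t * deriv f t = 0) ∨
      ∃ d : ℤ, ∃ C : ℂ, C ≠ 0 ∧ Dom f d C ∧ Dom (fun t => t * deriv f t) d (d * C) := by
  obtain ⟨m, hm⟩ := hp
  set g : ℂ → ℂ := fun u => f u⁻¹ with hgdef
  have hR1 : (0:ℝ) < (max R 1)⁻¹ := by positivity
  have hgd : ∀ u : ℂ, u ≠ 0 → ‖u‖ < (max R 1)⁻¹ → DifferentiableAt ℂ g u := by
    intro u hu hlt
    have h1 : R < ‖u⁻¹‖ := by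
      rw [norm_inv]
      calc R ≤ max R 1 := le_max_left R 1
        _ < ‖u‖⁻¹ := by
          rw [lt_inv_comm₀ (by positivity) (norm_pos_iff.2 hu)]
          exact hlt
    exact (hdiff _ h1).comp u (differentiableAt_inv hu)
  -- u^(m+1) * g u is analytic at 0
  have hfinv : Tendsto (fun u : ℂ => u ^ m * g u) (𝓝[≠] (0:ℂ)) (𝓝 0) := by
    have := hm.comp tendsto_inv_punctured
    apply Tendsto.congr' _ this
    filter_upwards [self_mem_nhdsWithin] with u hu
    have hu' : u ≠ 0 := hu
    simp only [Function.comp_def, hgdef]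
    rw [div_eq_mul_inv, ← inv_pow, inv_inv]
    ring
  have hh : AnalyticAt ℂ (fun u : ℂ => u ^ (m+1) * g u) 0 := by
    apply Complex.analyticAt_of_differentiable_on_punctured_nhds_of_continuousAt
    · have hball : {u : ℂ | u ≠ 0 ∧ ‖u‖ < (max R 1)⁻¹} ∈ 𝓝[≠] (0:ℂ) := by
        rw [Metric.mem_nhdsWithin_iff]
        refine ⟨(max R 1)⁻¹, hR1, ?_⟩
        intro u hu
        simp only [Set.mem_inter_iff, Metric.mem_ball, Complex.dist_eq, sub_zero] at hu
        exact ⟨hu.2, by simpa using hu.1⟩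
      filter_upwards [hball] with u hu
      exact (differentiableAt_pow _).mul (hgd u hu.1 hu.2)
    · have key : Tendsto (fun u : ℂ => u ^ (m+1) * g u) (𝓝 0) (𝓝 0) := by
        have h1 : Tendsto (fun u : ℂ => u ^ (m+1) * g u) (𝓝[≠] (0:ℂ)) (𝓝 0) := by
          have hu0 : Tendsto (fun u : ℂ => u) (𝓝[≠] (0:ℂ)) (𝓝 0) :=
            tendsto_id.mono_left nhdsWithin_le_nhds
          have := hu0.mul hfinv
          apply Tendsto.congr _ (by simpa using this)
          intro u; ring
        have h2 : Tendsto (fun u : ℂ => u ^ (m+1) * g u) (pure (0:ℂ)) (𝓝 0) := by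
          refine tendsto_pure_left.2 fun s hs => ?_
          simpa using mem_of_mem_nhds hs
        have h3 := tendsto_sup.2 ⟨h1, h2⟩
        rwa [nhdsNE_sup_pure] at h3
      rw [ContinuousAt]
      convert key using 2
      simp
  have hmero : MeromorphicAt g 0 := ⟨m+1, by simpa [smul_eq_mul] using hh⟩
  rcases eq_or_ne (meromorphicOrderAt g 0) ⊤ with ho | ho
  · -- f eventually zero
    left
    have h0 : ∀ᶠ u in 𝓝[≠] (0:ℂ), g u = 0 := meromorphicOrderAt_eq_top_iff.1 ho
    obtain ⟨s0, hs0, hsub0⟩ := eventually_iff_exists_mem.1 h0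
    obtain ⟨ε, hε, hball'⟩ := Metric.mem_nhdsWithin_iff.1 hs0
    have hball : ∀ u ∈ Metric.ball (0:ℂ) ε ∩ {(0:ℂ)}ᶜ, g u = 0 :=
      fun u hu => hsub0 u (hball' hu)
    have hev : ∀ t : ℂ, ε⁻¹ < ‖t‖ → f t = 0 := by
      intro t ht
      have ht0 : t ≠ 0 := by
        intro h; rw [h] at ht; simp at ht; linarith [inv_pos.2 hε]
      have : t⁻¹ ∈ Metric.ball (0:ℂ) ε ∩ {(0:ℂ)}ᶜ := by
        constructor
        · simp only [Metric.mem_ball, Complex.dist_eq, sub_zero]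
          rw [norm_inv]
          rw [inv_lt_comm₀ (norm_pos_iff.2 ht0) hε]
          exact ht
        · simp [ht0]
      have h2 := hball _ this
      simpa [hgdef, inv_inv] using h2
    have hevd : ∀ t : ℂ, ε⁻¹ < ‖t‖ → deriv f t = 0 := by
      intro t ht
      have : f =ᶠ[𝓝 t] (fun _ => 0) := by
        have hopen : IsOpen {s : ℂ | ε⁻¹ < ‖s‖} := by
          exact isOpen_lt continuous_const continuous_norm
        filter_upwards [hopen.mem_nhds ht] with s hs
        exact hev s hs
      rw [this.deriv_eq, deriv_const]
    filter_upwards [ev_gt ε⁻¹] with t ht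
    exact ⟨hev t ht, by rw [hevd t ht, mul_zero]⟩
  · -- f has a genuine degree
    right
    obtain ⟨k, hk⟩ : ∃ k : ℤ, meromorphicOrderAt g 0 = k := by
      cases h : meromorphicOrderAt g 0 with
      | top => exact absurd h ho
      | coe k => exact ⟨k, rfl⟩
    obtain ⟨h, hh_an, hh0, heq⟩ := (meromorphicOrderAt_eq_int_iff hmero (n := k)).1 hk
    -- find a punctured ball where g u = u^k * h u and h is analytic
    have hcomb : ∀ᶠ u in 𝓝[≠] (0:ℂ), g u = u ^ k * h u ∧ AnalyticAt ℂ h u := by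
      refine heq.mp ?_
      have := hh_an.eventually_analyticAt.filter_mono (nhdsWithin_le_nhds (s := {(0:ℂ)}ᶜ))
      filter_upwards [this] with u hu h2
      exact ⟨by simpa [smul_eq_mul] using h2, hu⟩
    obtain ⟨s0, hs0, hsub0⟩ := eventually_iff_exists_mem.1 hcomb
    obtain ⟨ε, hε, hball'⟩ := Metric.mem_nhdsWithin_iff.1 hs0
    have hball : ∀ u ∈ Metric.ball (0:ℂ) ε ∩ {(0:ℂ)}ᶜ, g u = u ^ k * h u ∧ AnalyticAt ℂ h u :=
      fun u hu => hsub0 u (hball' hu)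
    have hmem : ∀ t : ℂ, ε⁻¹ < ‖t‖ → t ≠ 0 ∧ ‖t⁻¹‖ < ε := by
      intro t ht
      have ht0 : t ≠ 0 := by
        intro h; rw [h] at ht; simp at ht; linarith [inv_pos.2 hε]
      refine ⟨ht0, ?_⟩
      rw [norm_inv, inv_lt_comm₀ (norm_pos_iff.2 ht0) hε]
      exact ht
    have hkey : ∀ t : ℂ, ε⁻¹ < ‖t‖ → f t = t ^ (-k) * h t⁻¹ ∧ AnalyticAt ℂ h t⁻¹ := by
      intro t ht
      obtain ⟨ht0, htinv⟩ := hmem t ht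
      have : t⁻¹ ∈ Metric.ball (0:ℂ) ε ∩ {(0:ℂ)}ᶜ := by
        refine ⟨?_, by simp [ht0]⟩
        simp only [Metric.mem_ball, Complex.dist_eq, sub_zero]
        exact htinv
      obtain ⟨h1, h2⟩ := hball _ this
      refine ⟨?_, h2⟩
      have : f t = g t⁻¹ := by simp [hgdef, inv_inv]
      rw [this, h1, inv_zpow, ← zpow_neg]
    refine ⟨-k, h 0, hh0, ?_, ?_⟩
    · -- Dom f (-k) (h 0)
      rw [Dom]
      have hlim : Tendsto (fun t : ℂ => h t⁻¹) atInfty (𝓝 (h 0)) :=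
        (hh_an.continuousAt.tendsto).comp tendsto_inv0
      apply Tendsto.congr' _ hlim
      filter_upwards [ev_gt ε⁻¹, ev_ne] with t ht ht0
      rw [(hkey t ht).1, mul_comm, mul_div_assoc, div_self (zpow_ne_zero _ ht0), mul_one]
    · -- Dom (t * deriv f) (-k) (-k * h 0)
      rw [Dom]
      have hd1 : Tendsto (fun t : ℂ => ((-k : ℤ) : ℂ) * h t⁻¹) atInfty (𝓝 ((-k : ℤ) * h 0)) :=
        Tendsto.const_mul _ ((hh_an.continuousAt.tendsto).comp tendsto_inv0)
      have hdc : ContinuousAt (deriv h) 0 := by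
        have h1 := (hh_an.fderiv).continuousAt
        have h2 : ContinuousAt (fun x => fderiv ℂ h x 1) 0 :=
          ((ContinuousLinearMap.apply ℂ ℂ (1:ℂ)).continuous.continuousAt).comp h1
        have h3 : (fun x => fderiv ℂ h x 1) = deriv h := by
          funext x; exact fderiv_apply_one_eq_deriv
        rwa [h3] at h2
      have hd2 : Tendsto (fun t : ℂ => t⁻¹ * deriv h t⁻¹) atInfty (𝓝 0) := by
        have := tendsto_inv0.mul ((hdc.tendsto).comp tendsto_inv0)
        simpa using this
      have hlim := hd1.sub hd2
      rw [sub_zero] at hlim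
      apply Tendsto.congr' _ hlim
      filter_upwards [ev_gt ε⁻¹, ev_ne] with t ht ht0
      -- compute deriv f t
      have hopen : IsOpen {s : ℂ | ε⁻¹ < ‖s‖} := isOpen_lt continuous_const continuous_norm
      have hfeq : f =ᶠ[𝓝 t] fun s => s ^ (-k) * h s⁻¹ := by
        filter_upwards [hopen.mem_nhds ht] with s hs
        exact (hkey s hs).1
      have hdh : HasDerivAt (fun s : ℂ => h s⁻¹) (deriv h t⁻¹ * (-(t ^ 2)⁻¹)) t := by
        have h1 : HasDerivAt h (deriv h t⁻¹) t⁻¹ :=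
          ((hkey t ht).2.differentiableAt).hasDerivAt
        have h2 : HasDerivAt (fun s : ℂ => s⁻¹) (-(t ^ 2)⁻¹) t := hasDerivAt_inv ht0
        exact h1.comp t h2
      have hdz : HasDerivAt (fun s : ℂ => s ^ (-k)) (((-k : ℤ) : ℂ) * t ^ (-k - 1)) t :=
        hasDerivAt_zpow (-k) t (Or.inl ht0)
      have hder : deriv f t =
          ((-k : ℤ) : ℂ) * t ^ (-k - 1) * h t⁻¹ + t ^ (-k) * (deriv h t⁻¹ * (-(t ^ 2)⁻¹)) := by
        rw [hfeq.deriv_eq]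
        exact (hdz.mul hdh).deriv
      have hzk : (t : ℂ) ^ (-k) ≠ 0 := zpow_ne_zero _ ht0
      rw [hder, eq_div_iff hzk, zpow_sub₀ ht0, zpow_one]
      have h3 : t * t⁻¹ = 1 := mul_inv_cancel₀ ht0
      have h4 : t * ((t:ℂ) ^ 2)⁻¹ = t⁻¹ := by
        rw [sq, mul_inv, ← mul_assoc, mul_inv_cancel₀ ht0, one_mul]
      linear_combination t ^ (-k) * deriv h t⁻¹ * h4 - ((-k : ℤ) : ℂ) * t ^ (-k) * h t⁻¹ * h3


lemma eq_balance {F G : ℂ → ℂ} (heq : ∀ᶠ t in atInfty, F t = G t)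
    {D : ℤ} {c1 c2 : ℂ} (h1 : Dom F D c1) (h2 : Dom G D c2) : c1 = c2 :=
  h1.unique (h2.congr' (heq.mono fun _ h => h.symm))

/-- Balancing analysis of the third equation, when `2y+2w-1` has a genuine positive
degree `m` with leading coefficient `V ≠ 0`. -/
lemma eq3_analysis {y z w : ℂ → ℂ} {B : ℂ}
    (heq3 : ∀ᶠ t in atInfty, t * deriv z t
      = 2*z t^2*w t - z t^2 + B*z t + 2*y t*z t^2 + t)
    {r m : ℤ} {Z V : ℂ} (hZ : Z ≠ 0) (hV : V ≠ 0) (hm : 1 ≤ m)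
    (hzD : Dom z r Z) (hzD' : Dom (fun t => t * deriv z t) r (r*Z))
    (hv : Dom (fun t => 2*y t + 2*w t - 1) m V) :
    r ≤ 0 ∧ 2*r + m = 1 ∧ V * (Z*Z) = -1 := by
  have hz2v : Dom (fun t => z t * z t * (2*y t + 2*w t - 1)) (r+r+m) (Z*Z*V) :=
    (hzD.mul hzD).mul hv
  have hBz : Dom (fun t => B * z t) r (B*Z) := hzD.const_mul B
  have main : ∀ D : ℤ, ∀ c1 c2 c3 c4 : ℂ,
      Dom (fun t => z t * z t * (2*y t + 2*w t - 1)) D c1 →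
      Dom (fun t => B * z t) D c2 → Dom (fun t => t) D c3 →
      Dom (fun t => t * deriv z t) D c4 → c4 = c1 + c2 + c3 := by
    intro D c1 c2 c3 c4 h1 h2 h3 h4
    refine eq_balance heq3 h4 (((h1.add h2).add h3).of_forall_eq fun t => by ring)
  have hr0 : r ≤ 0 := by
    by_contra hr; push_neg at hr
    have h := main (r+r+m) (Z*Z*V) 0 0 0 hz2v (hBz.shift (by omega)) (dom_id.shift (by omega))
      (hzD'.shift (by omega))
    exact (mul_ne_zero (mul_ne_zero hZ hZ) hV) (by linear_combination -h)
  have hm1 : 2*r + m ≤ 1 := by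
    by_contra hc; push_neg at hc
    have h := main (r+r+m) (Z*Z*V) 0 0 0 hz2v (hBz.shift (by omega)) (dom_id.shift (by omega))
      (hzD'.shift (by omega))
    exact (mul_ne_zero (mul_ne_zero hZ hZ) hV) (by linear_combination -h)
  have hm2 : 2*r + m = 1 := by
    by_contra hc
    have h := main 1 0 0 1 0 (hz2v.shift (by omega)) (hBz.shift (by omega)) dom_id
      (hzD'.shift (by omega))
    exact one_ne_zero (by linear_combination -h)
  refine ⟨hr0, hm2, ?_⟩
  have h := main 1 (Z*Z*V) 0 1 0 (hz2v.cast (by omega) rfl) (hBz.shift (by omega)) dom_id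
    (hzD'.shift (by omega))
  linear_combination -h


/-- If `y` had a pole of positive order `q`, we reach a contradiction. -/
lemma contra_q {x y z w : ℂ → ℂ} {A B a1 a3 : ℂ}
    (heq1 : ∀ᶠ t in atInfty, t * deriv x t
      = 2*x t^2*y t - x t^2 + A*x t + 2*a3*z t + 2*z t^2*w t + t)
    (heq2 : ∀ᶠ t in atInfty, t * deriv y t
      = -2*x t*y t^2 + 2*x t*y t - A*y t + a1)
    (heq3 : ∀ᶠ t in atInfty, t * deriv z t
      = 2*z t^2*w t - z t^2 + B*z t + 2*y t*z t^2 + t)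
    (heq4 : ∀ᶠ t in atInfty, t * deriv w t
      = -2*z t*w t^2 + 2*z t*w t - B*w t - 2*a3*y t - 4*y t*z t*w t + a3)
    {q r : ℤ} {Y Z : ℂ} (hY : Y ≠ 0) (hZ : Z ≠ 0) (hq : 1 ≤ q)
    (hyD : Dom y q Y) (hyD' : Dom (fun t => t * deriv y t) q (q*Y))
    (hzD : Dom z r Z) (hzD' : Dom (fun t => t * deriv z t) r (r*Z))
    (hxnf : (∀ᶠ t in atInfty, x t = 0 ∧ t * deriv x t = 0) ∨
      ∃ p : ℤ, ∃ X : ℂ, X ≠ 0 ∧ Dom x p X ∧ Dom (fun t => t * deriv x t) p (p*X))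
    (hwnf : (∀ᶠ t in atInfty, w t = 0 ∧ t * deriv w t = 0) ∨
      ∃ s : ℤ, ∃ W : ℂ, W ≠ 0 ∧ Dom w s W ∧ Dom (fun t => t * deriv w t) s (s*W)) :
    False := by
  -- Step 1: the star relation  (2a₃z + 2z²w)/t → -1.
  have hstar : Dom (fun t => 2*a3*z t + 2*z t^2*w t) 1 (-1) := by
    have hkey : ∀ c1 c2 c3 c4 : ℂ,
        Dom (fun t => t * deriv x t) 1 c1 →
        Dom (fun t => x t * x t * y t) 1 c2 →
        Dom (fun t => x t * x t) 1 c3 →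
        Dom (fun t => A * x t) 1 c4 →
        Dom (fun t => 2*a3*z t + 2*z t^2*w t) 1 (c1 - 2*c2 + c3 - c4 - 1) := by
      intro c1 c2 c3 c4 h1 h2 h3 h4
      have hsum : Dom (fun t => t * deriv x t - 2*(x t * x t * y t) + x t * x t - A * x t - t)
          1 (c1 - 2*c2 + c3 - c4 - 1) :=
        ((((h1.sub (h2.const_mul 2)).add h3).sub h4).sub dom_id)
      apply hsum.congr'
      filter_upwards [heq1] with t h
      rw [h]; ring
    rcases hxnf with hx0 | ⟨p, X, hX, hxD, hxD'⟩
    · have e0 : ∀ᶠ t in atInfty, x t = 0 := hx0.mono fun t h => h.1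
      have e0' : ∀ᶠ t in atInfty, t * deriv x t = 0 := hx0.mono fun t h => h.2
      have h := hkey 0 0 0 0 (dom_zero_of_ev e0' 1)
        (dom_zero_of_ev (e0.mono fun t h => by simp [h]) 1)
        (dom_zero_of_ev (e0.mono fun t h => by simp [h]) 1)
        (dom_zero_of_ev (e0.mono fun t h => by simp [h]) 1)
      simpa using h
    · -- first show p + q ≤ 0 using the second equation
      have hpq : p + q ≤ 0 := by
        by_contra hc; push_neg at hc
        have hxy2 : Dom (fun t => x t * y t * y t) (p+q+q) (X*Y*Y) := (hxD.mul hyD).mul hyD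
        have hsum : Dom (fun t => -2*(x t * y t * y t) + 2*(x t * y t) + (-A)*y t + a1)
            (p+q+q) (-2*(X*Y*Y) + 0 + 0 + 0) := by
          refine (((hxy2.const_mul (-2)).add ?_).add ?_).add ?_
          · exact ((hxD.mul hyD).const_mul 2).shift (by omega)
          · exact (hyD.const_mul (-A)).shift (by omega)
          · exact (dom_const a1).shift (by omega)
        have h := eq_balance heq2 (hyD'.shift (by omega))
          (hsum.of_forall_eq fun t => by ring)
        exact (mul_ne_zero (mul_ne_zero hX hY) hY) (by linear_combination h/2)
      have h := hkey 0 0 0 0 (hxD'.shift (by omega))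
        (((hxD.mul hxD).mul hyD).shift (by omega))
        ((hxD.mul hxD).shift (by omega))
        ((hxD.const_mul A).shift (by omega))
      simpa using h
  -- helper for dividing equation 4 at a level D
  have main4 : ∀ D : ℤ, ∀ c1 c2 c3 c4 c5 c6 c7 : ℂ,
      Dom (fun t => z t * w t * w t) D c1 →
      Dom (fun t => z t * w t) D c2 →
      Dom (fun t => B * w t) D c3 →
      Dom (fun t => a3 * y t) D c4 →
      Dom (fun t => y t * z t * w t) D c5 →
      Dom (fun t => (a3 : ℂ)) D c6 →
      Dom (fun t => t * deriv w t) D c7 →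
      c7 = -2*c1 + 2*c2 - c3 - 2*c4 - 4*c5 + c6 := by
    intro D c1 c2 c3 c4 c5 c6 c7 h1 h2 h3 h4 h5 h6 h7
    have hsum := ((((((h1.const_mul (-2)).add (h2.const_mul 2)).sub h3).sub
      (h4.const_mul 2)).sub (h5.const_mul 4)).add h6)
    exact eq_balance heq4 h7 (hsum.of_forall_eq fun t => by ring)
  -- Step 2: case analysis on w
  rcases hwnf with hw0 | ⟨s, W, hW, hwD, hwD'⟩
  · -- w eventually zero: v = 2y + 2w - 1 has degree q, coefficient 2Y
    have ew : ∀ᶠ t in atInfty, w t = 0 := hw0.mono fun t h => h.1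
    have hv : Dom (fun t => 2*y t + 2*w t - 1) q (2*Y) := by
      have := ((hyD.const_mul 2).add
        (dom_zero_of_ev (f := fun t => 2*w t) (ew.mono fun t h => by simp [h]) q)).sub
        ((dom_const 1).shift (by omega))
      simpa using this
    obtain ⟨hr0, hrm, hVZ⟩ := eq3_analysis (V := 2*Y) heq3 hZ (by simpa using hY) hq hzD hzD' hv
    have hcon : Dom (fun t => 2*a3*z t + 2*z t^2*w t) 1 0 := by
      have h1 : Dom (fun t => 2*a3*z t) 1 0 := (hzD.const_mul (2*a3)).shift (by omega)
      have h2 : Dom (fun t => 2*z t^2*w t) 1 0 :=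
        dom_zero_of_ev (ew.mono fun t h => by simp [h]) 1
      simpa using h1.add h2
    exact one_ne_zero (by linear_combination -(hstar.unique hcon))
  · rcases lt_trichotomy s q with hsq | hsq | hsq
    · -- s < q
      have hv : Dom (fun t => 2*y t + 2*w t - 1) q (2*Y) := by
        have := ((hyD.const_mul 2).add ((hwD.const_mul 2).shift (by omega))).sub
          ((dom_const 1).shift (by omega))
        simpa using this
      obtain ⟨hr0, hrm, hVZ⟩ := eq3_analysis (V := 2*Y) heq3 hZ (by simpa using hY) hq hzD hzD' hv
      have hcon : Dom (fun t => 2*a3*z t + 2*z t^2*w t) 1 0 := by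
        have h1 : Dom (fun t => 2*a3*z t) 1 0 := (hzD.const_mul (2*a3)).shift (by omega)
        have h2 : Dom (fun t => 2*(z t * z t * w t)) 1 0 :=
          (((hzD.mul hzD).mul hwD).const_mul 2).shift (by omega)
        have h3 := (h1.add h2).of_forall_eq (g := fun t => 2*a3*z t + 2*z t^2*w t)
          fun t => by ring
        simpa using h3
      exact one_ne_zero (by linear_combination -(hstar.unique hcon))
    · -- s = q
      subst hsq
      rcases le_or_gt r (-s) with hrs | hrs
      · -- r ≤ -s : the `t` term in equation 3 is unbalanced
        have hsum : Dom (fun t => 2*(z t*z t*w t) - z t*z t + B*z t + 2*(y t*(z t*z t)) + t)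
            1 (0 - 0 + 0 + 0 + 1) := by
          refine (((Dom.sub ?_ ?_).add ?_).add ?_).add dom_id
          · exact (((hzD.mul hzD).mul hwD).const_mul 2).shift (by omega)
          · exact (hzD.mul hzD).shift (by omega)
          · exact (hzD.const_mul B).shift (by omega)
          · exact ((hyD.mul (hzD.mul hzD)).const_mul 2).shift (by omega)
        have h := eq_balance heq3 (hzD'.shift (by omega))
          (hsum.of_forall_eq fun t => by ring)
        exact one_ne_zero (by linear_combination -h)
      · -- r ≥ 1 - s : balance equation 4 at degree r + 2s to get W = -2Y
        have hW2 : W = -2*Y := by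
          have h := main4 (r+s+s) (Z*W*W) 0 0 0 (Y*Z*W) 0 0
            ((hzD.mul hwD).mul hwD)
            (((hzD.mul hwD)).shift (by omega))
            ((hwD.const_mul B).shift (by omega))
            ((hyD.const_mul a3).shift (by omega))
            (((hyD.mul hzD).mul hwD).cast (by omega) rfl)
            ((dom_const a3).shift (by omega))
            (hwD'.shift (by omega))
          have h2 : Z*W*(W + 2*Y) = 0 := by linear_combination h/2
          rcases mul_eq_zero.1 h2 with h3 | h3
          · exact absurd h3 (mul_ne_zero hZ hW)
          · linear_combination h3
        have hv : Dom (fun t => 2*y t + 2*w t - 1) s (2*Y + 2*W) := by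
          have := ((hyD.const_mul 2).add (hwD.const_mul 2)).sub
            ((dom_const 1).shift (by omega))
          simpa using this
        have hVne : 2*Y + 2*W ≠ 0 := by
          rw [hW2]; intro h; apply hY; linear_combination -h/2
        obtain ⟨hr0, hrm, hVZ⟩ := eq3_analysis (V := 2*Y + 2*W) heq3 hZ hVne hq hzD hzD' hv
        have hcon : Dom (fun t => 2*a3*z t + 2*z t^2*w t) 1 (2*((Z*Z)*W)) := by
          have h1 : Dom (fun t => 2*a3*z t) 1 0 := (hzD.const_mul (2*a3)).shift (by omega)
          have h2 : Dom (fun t => 2*(z t * z t * w t)) 1 (2*((Z*Z)*W)) :=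
            (((hzD.mul hzD).mul hwD).const_mul 2).cast (by omega) rfl
          have h3 : Dom (fun t => 2*a3*z t + 2*(z t*z t*w t)) 1 (0 + 2*((Z*Z)*W)) := h1.add h2
          have h4 := h3.of_forall_eq (g := fun t => 2*a3*z t + 2*z t^2*w t) fun t => by ring
          simpa using h4
        have hfin := hstar.unique hcon
        -- now  (2Y+2W)(Z Z) = -1  and  2 Z Z W = -1  and W = -2Y give a contradiction
        rw [hW2] at hVZ hfin
        have : (1:ℂ) = 0 := by linear_combination 2*hVZ + hfin
        exact one_ne_zero this
    · -- s > q
      have hv : Dom (fun t => 2*y t + 2*w t - 1) s (2*W) := by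
        have := (((hyD.const_mul 2).shift (by omega)).add (hwD.const_mul 2)).sub
          ((dom_const 1).shift (by omega))
        simpa using this
      obtain ⟨hr0, hrm, hVZ⟩ := eq3_analysis (V := 2*W) (m := s) heq3 hZ
        (by simpa using hW) (by omega) hzD hzD' hv
      have h := main4 (r+s+s) (Z*W*W) 0 0 0 0 0 0
        ((hzD.mul hwD).mul hwD)
        (((hzD.mul hwD)).shift (by omega))
        ((hwD.const_mul B).shift (by omega))
        ((hyD.const_mul a3).shift (by omega))
        (((hyD.mul hzD).mul hwD).shift (by omega))
        ((dom_const a3).shift (by omega))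
        (hwD'.shift (by omega))
      exact (mul_ne_zero (mul_ne_zero hZ hW) hW) (by linear_combination h/2)


/-- If `w` had a pole of positive order `s` (with `y` bounded), contradiction. -/
lemma contra_s {y z w : ℂ → ℂ} {B a3 : ℂ}
    (heq3 : ∀ᶠ t in atInfty, t * deriv z t
      = 2*z t^2*w t - z t^2 + B*z t + 2*y t*z t^2 + t)
    (heq4 : ∀ᶠ t in atInfty, t * deriv w t
      = -2*z t*w t^2 + 2*z t*w t - B*w t - 2*a3*y t - 4*y t*z t*w t + a3)
    {s r : ℤ} {W Z Y0 : ℂ} (hW : W ≠ 0) (hZ : Z ≠ 0) (hs : 1 ≤ s)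
    (hwD : Dom w s W) (hwD' : Dom (fun t => t * deriv w t) s (s*W))
    (hzD : Dom z r Z) (hzD' : Dom (fun t => t * deriv z t) r (r*Z))
    (hy0 : Dom y 0 Y0) : False := by
  rcases le_or_gt r (-s) with hrs | hrs
  · -- the `t` term in equation 3 is unbalanced
    have hsum : Dom (fun t => 2*(z t*z t*w t) - z t*z t + B*z t + 2*(y t*(z t*z t)) + t)
        1 (0 - 0 + 0 + 0 + 1) := by
      refine (((Dom.sub ?_ ?_).add ?_).add ?_).add dom_id
      · exact (((hzD.mul hzD).mul hwD).const_mul 2).shift (by omega)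
      · exact (hzD.mul hzD).shift (by omega)
      · exact (hzD.const_mul B).shift (by omega)
      · exact ((hy0.mul (hzD.mul hzD)).const_mul 2).shift (by omega)
    have h := eq_balance heq3 (hzD'.shift (by omega)) (hsum.of_forall_eq fun t => by ring)
    have : (1:ℂ) = 0 := by linear_combination -h
    exact one_ne_zero this
  · -- balance equation 4 at degree r + 2s
    have hsum : Dom (fun t => -2*(z t*w t*w t) + 2*(z t*w t) - B*w t - 2*(a3*y t)
        - 4*(y t*z t*w t) + a3) (r+s+s) (-2*((Z*W)*W) + 0 - 0 - 0 - 0 + 0) := by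
      refine ((((Dom.add ?_ ?_).sub ?_).sub ?_).sub ?_).add ?_
      · exact ((hzD.mul hwD).mul hwD).const_mul (-2) |>.of_forall_eq fun t => by ring
      · exact ((hzD.mul hwD).const_mul 2).shift (by omega)
      · exact (hwD.const_mul B).shift (by omega)
      · exact ((hy0.const_mul a3).const_mul 2).shift (by omega)
      · exact (((hy0.mul hzD).mul hwD).const_mul 4).shift (by omega)
      · exact (dom_const a3).shift (by omega)
    have h := eq_balance heq4 (hwD'.shift (by omega)) (hsum.of_forall_eq fun t => by ring)
    have h2 : (Z*W)*W = 0 := by linear_combination h/2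
    exact (mul_ne_zero (mul_ne_zero hZ hW) hW) h2


end B4aux

set_option maxHeartbeats 2000000 in
/-- For a solution of the Sasano system `B₄⁽¹⁾` on an annulus `{|t| > R}` whose components
have at worst poles at `t = ∞`, the component `z` has a pole of some order `n ≥ 1`
at `t = ∞` while `x, y, w` are holomorphic at `t = ∞`. -/
theorem B4_meromorphic_at_infinity_structure (a0 a1 a2 a3 a4 : ℂ)
    (hsum : a0 + a1 + 2*a2 + 2*a3 + 2*a4 = 1) (R : ℝ) (x y z w : ℂ → ℂ)
    (hsol : SolvesB4On a0 a1 a2 a3 a4 x y z w {t : ℂ | R < ‖t‖})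
    (hx : AtWorstPoleAtInfty x) (hy : AtWorstPoleAtInfty y)
    (hz : AtWorstPoleAtInfty z) (hw : AtWorstPoleAtInfty w) :
    (∃ n : ℕ, 1 ≤ n ∧ PoleAtInftyOfOrder z n) ∧
      HoloAtInfty x ∧ HoloAtInfty y ∧ HoloAtInfty w := by
  have hdx : ∀ t : ℂ, R < ‖t‖ → DifferentiableAt ℂ x t := fun t ht => (hsol t ht).1
  have hdy : ∀ t : ℂ, R < ‖t‖ → DifferentiableAt ℂ y t := fun t ht => (hsol t ht).2.1
  have hdz : ∀ t : ℂ, R < ‖t‖ → DifferentiableAt ℂ z t := fun t ht => (hsol t ht).2.2.1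
  have hdw : ∀ t : ℂ, R < ‖t‖ → DifferentiableAt ℂ w t := fun t ht => (hsol t ht).2.2.2.1
  have hB4 : ∀ᶠ t in atInfty, B4Eqs a0 a1 a2 a3 a4 x y z w t := by
    filter_upwards [B4aux.ev_gt R] with t ht
    exact (hsol t ht).2.2.2.2
  have heq1 : ∀ᶠ t in atInfty, t * deriv x t =
      2 * x t ^ 2 * y t - x t ^ 2 + (1 - 2*a2 - 2*a3 - 2*a4) * x t
        + 2 * a3 * z t + 2 * z t ^ 2 * w t + t := hB4.mono fun t h => h.1
  have heq2 : ∀ᶠ t in atInfty, t * deriv y t =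
      -2 * x t * y t ^ 2 + 2 * x t * y t - (1 - 2*a2 - 2*a3 - 2*a4) * y t + a1 :=
    hB4.mono fun t h => h.2.1
  have heq3 : ∀ᶠ t in atInfty, t * deriv z t =
      2 * z t ^ 2 * w t - z t ^ 2 + (1 - 2*a4) * z t + 2 * y t * z t ^ 2 + t :=
    hB4.mono fun t h => h.2.2.1
  have heq4 : ∀ᶠ t in atInfty, t * deriv w t =
      -2 * z t * w t ^ 2 + 2 * z t * w t - (1 - 2*a4) * w t
        - 2 * a3 * y t - 4 * y t * z t * w t + a3 := hB4.mono fun t h => h.2.2.2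
  -- Step 1: z is not eventually zero; it has a genuine degree r with coefficient Z ≠ 0.
  obtain ⟨r, Z, hZ, hzD, hzD'⟩ : ∃ r : ℤ, ∃ Z : ℂ, Z ≠ 0 ∧ B4aux.Dom z r Z ∧
      B4aux.Dom (fun t => t * deriv z t) r (r*Z) := by
    rcases B4aux.nf hdz hz with hz0 | h
    · exfalso
      have h1 : B4aux.Dom (fun t => t * deriv z t) 1 0 :=
        B4aux.dom_zero_of_ev (hz0.mono fun t h => h.2) 1
      have ez : ∀ᶠ t in atInfty, z t = 0 := hz0.mono fun t h => h.1
      have h2 : B4aux.Dom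
          (fun t => (2*z t^2*w t - z t^2 + (1-2*a4)*z t + 2*y t*z t^2) + t) 1 (0 + 1) :=
        (B4aux.dom_zero_of_ev
          (f := fun t => 2*z t^2*w t - z t^2 + (1-2*a4)*z t + 2*y t*z t^2)
          (ez.mono fun t h => by simp [h]) 1).add B4aux.dom_id
      have h3 := B4aux.eq_balance heq3 h1 (h2.of_forall_eq fun t => by ring)
      have : (1:ℂ) = 0 := by linear_combination -h3
      exact one_ne_zero this
    · exact h
  -- Step 2: y is holomorphic at infinity.
  obtain ⟨Y0, hyT, hy0, hy0'⟩ : ∃ Y0 : ℂ, Tendsto y atInfty (𝓝 Y0) ∧ B4aux.Dom y 0 Y0 ∧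
      B4aux.Dom (fun t => t * deriv y t) 0 0 := by
    rcases B4aux.nf hdy hy with hy0 | ⟨q, Y, hYne, hyD, hyD'⟩
    · exact ⟨0, (B4aux.dom_zero_of_ev (hy0.mono fun t h => h.1) 0).tendsto0,
        B4aux.dom_zero_of_ev (hy0.mono fun t h => h.1) 0,
        B4aux.dom_zero_of_ev (hy0.mono fun t h => h.2) 0⟩
    · rcases lt_trichotomy q 0 with hq | hq | hq
      · exact ⟨0, hyD.tendsto_of_neg hq, hyD.shift hq, hyD'.shift hq⟩
      · subst hq
        exact ⟨Y, hyD.tendsto0, hyD, hyD'.cast rfl (by push_cast; ring)⟩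
      · exact absurd (B4aux.contra_q heq1 heq2 heq3 heq4 hYne hZ (by omega) hyD hyD'
          hzD hzD' (B4aux.nf hdx hx) (B4aux.nf hdw hw)) not_false
  -- Step 3: w is holomorphic at infinity.
  obtain ⟨W0, hwT, hw0, hw0'⟩ : ∃ W0 : ℂ, Tendsto w atInfty (𝓝 W0) ∧ B4aux.Dom w 0 W0 ∧
      B4aux.Dom (fun t => t * deriv w t) 0 0 := by
    rcases B4aux.nf hdw hw with hw0 | ⟨s, W, hWne, hwD, hwD'⟩
    · exact ⟨0, (B4aux.dom_zero_of_ev (hw0.mono fun t h => h.1) 0).tendsto0,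
        B4aux.dom_zero_of_ev (hw0.mono fun t h => h.1) 0,
        B4aux.dom_zero_of_ev (hw0.mono fun t h => h.2) 0⟩
    · rcases lt_trichotomy s 0 with hs | hs | hs
      · exact ⟨0, hwD.tendsto_of_neg hs, hwD.shift hs, hwD'.shift hs⟩
      · subst hs
        exact ⟨W, hwD.tendsto0, hwD, hwD'.cast rfl (by push_cast; ring)⟩
      · exact absurd (B4aux.contra_s heq3 heq4 hWne hZ (by omega) hwD hwD'
          hzD hzD' hy0) not_false
  -- Step 4: z has a pole, i.e. r ≥ 1.
  have hr1 : 1 ≤ r := by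
    by_contra hr; push_neg at hr
    have hsum : B4aux.Dom
        (fun t => 2*(z t*z t*w t) - z t*z t + (1-2*a4)*z t + 2*(y t*(z t*z t)) + t)
        1 (0 - 0 + 0 + 0 + 1) := by
      refine (((B4aux.Dom.sub ?_ ?_).add ?_).add ?_).add B4aux.dom_id
      · exact (((hzD.mul hzD).mul hw0).const_mul 2).shift (by omega)
      · exact (hzD.mul hzD).shift (by omega)
      · exact (hzD.const_mul (1-2*a4)).shift (by omega)
      · exact ((hy0.mul (hzD.mul hzD)).const_mul 2).shift (by omega)
    have h := B4aux.eq_balance heq3 (hzD'.shift (by omega))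
      (hsum.of_forall_eq fun t => by ring)
    have : (1:ℂ) = 0 := by linear_combination -h
    exact one_ne_zero this
  -- Step 5: asymptotics of z·(2y+2w-1), z⁻¹ and consequences.
  obtain ⟨δ, hδ⟩ : ∃ δ : ℂ, B4aux.Dom (fun t => t) r δ := by
    rcases eq_or_lt_of_le hr1 with h1 | h1
    · exact ⟨1, B4aux.dom_id.cast h1 rfl⟩
    · exact ⟨0, B4aux.dom_id.shift h1⟩
  have hz2v : B4aux.Dom (fun t => z t * z t * (2*y t + 2*w t - 1)) r
      ((r*Z - (1-2*a4)*Z) - δ) := by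
    have h1 : B4aux.Dom (fun t => t * deriv z t - (1-2*a4)*z t - t) r
        ((r*Z - (1-2*a4)*Z) - δ) := by
      have := (hzD'.sub (hzD.const_mul (1-2*a4))).sub hδ
      exact this.cast rfl (by push_cast; ring)
    apply h1.congr'
    filter_upwards [heq3] with t h
    rw [h]; ring
  set L3 : ℂ := (r*Z - (1-2*a4)*Z) - δ with hL3
  have hzne : ∀ᶠ t in atInfty, z t ≠ 0 := by
    have h1 := hzD.eventually_ne hZ
    filter_upwards [h1] with t h2
    intro hzt; apply h2; rw [hzt]; simp
  have hzvT : Tendsto (fun t => z t * (2*y t + 2*w t - 1)) atInfty (𝓝 (L3 * Z⁻¹)) := by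
    have h1 : Tendsto
        (fun t => (z t * z t * (2*y t + 2*w t - 1) / t^(r:ℤ)) * (z t / t^(r:ℤ))⁻¹)
        atInfty (𝓝 (L3 * Z⁻¹)) := Filter.Tendsto.mul hz2v (Filter.Tendsto.inv₀ hzD hZ)
    apply Tendsto.congr' _ h1
    filter_upwards [hzne, B4aux.ev_ne] with t h1t h2t
    have hzp : (t:ℂ)^(r:ℤ) ≠ 0 := zpow_ne_zero _ h2t
    field_simp
  have hzinvT : Tendsto (fun t => (z t)⁻¹) atInfty (𝓝 0) := by
    have h1 := Filter.Tendsto.mul (Filter.Tendsto.inv₀ hzD hZ)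
      (B4aux.tendsto_zpow_neg (show -r < 0 by omega))
    apply Tendsto.congr' _ (by simpa using h1)
    filter_upwards [hzne, B4aux.ev_ne] with t h1t h2t
    have hzp : (t:ℂ)^(r:ℤ) ≠ 0 := zpow_ne_zero _ h2t
    field_simp
  have hvT : Tendsto (fun t => 2*y t + 2*w t - 1) atInfty (𝓝 0) := by
    have h1 : Tendsto (fun t => (z t * (2*y t + 2*w t - 1)) * (z t)⁻¹) atInfty (𝓝 0) := by
      have h2 := hzvT.mul hzinvT
      rw [mul_zero] at h2
      exact h2
    apply Tendsto.congr' _ h1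
    filter_upwards [hzne] with t h1t
    field_simp
  have hV0 : 2*Y0 + 2*W0 - 1 = 0 := by
    have h2 : Tendsto (fun t => 2*y t + 2*w t - 1) atInfty (𝓝 (2*Y0 + 2*W0 - 1)) :=
      ((hyT.const_mul 2).add (hwT.const_mul 2)).sub tendsto_const_nhds
    exact tendsto_nhds_unique h2 hvT
  -- Step 6: w tends to 0.
  have h2zw2 : Tendsto (fun t => 2*(z t * w t * w t)) atInfty
      (𝓝 (0 + 2*((L3 * Z⁻¹)*W0) + (1-2*a4)*W0 + 2*(a3*Y0) - a3)) := by
    have e0 : Tendsto (fun t => t * deriv w t) atInfty (𝓝 0) := hw0'.tendsto0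
    have e1 : Tendsto (fun t => 2*(z t*(2*y t+2*w t-1)*w t)) atInfty
        (𝓝 (2*((L3 * Z⁻¹)*W0))) := (hzvT.mul hwT).const_mul 2
    have e2 : Tendsto (fun t => (1-2*a4)*w t) atInfty (𝓝 ((1-2*a4)*W0)) :=
      hwT.const_mul (1-2*a4)
    have e3 : Tendsto (fun t => 2*(a3*(y t))) atInfty (𝓝 (2*(a3*Y0))) :=
      (hyT.const_mul a3).const_mul 2
    have e4 : Tendsto (fun _ : ℂ => a3) atInfty (𝓝 a3) := tendsto_const_nhds
    have h1 := (((e0.add e1).add e2).add e3).sub e4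
    apply Tendsto.congr' _ h1
    filter_upwards [heq4] with t h
    rw [h]; ring
  set L4 : ℂ := 0 + 2*((L3 * Z⁻¹)*W0) + (1-2*a4)*W0 + 2*(a3*Y0) - a3 with hL4
  have hW0 : W0 = 0 := by
    by_contra hW0ne
    have hwne : ∀ᶠ t in atInfty, w t ≠ 0 := hwT.eventually_ne hW0ne
    have hden : Tendsto (fun t => (2*(w t*w t))⁻¹) atInfty (𝓝 ((2*(W0*W0))⁻¹)) :=
      Filter.Tendsto.inv₀ ((hwT.mul hwT).const_mul 2)
        (mul_ne_zero two_ne_zero (mul_ne_zero hW0ne hW0ne))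
    have hzT : Tendsto z atInfty (𝓝 (L4 * (2*(W0*W0))⁻¹)) := by
      apply Tendsto.congr' _ (h2zw2.mul hden)
      filter_upwards [hwne] with t h1t
      field_simp
    have hcontra : Tendsto (fun t => z t / t^(r:ℤ)) atInfty (𝓝 0) := by
      have h2 : Tendsto (fun t => z t * (t^(r:ℤ))⁻¹) atInfty (𝓝 0) := by
        have := hzT.mul (B4aux.tendsto_zpow_neg (show -r < 0 by omega))
        simpa [zpow_neg] using this
      apply Tendsto.congr' _ h2
      filter_upwards [B4aux.ev_ne] with t ht
      rw [div_eq_mul_inv]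
    exact hZ (tendsto_nhds_unique hzD hcontra)
  -- Step 7: x is holomorphic at infinity.
  have hy12 : Y0 = 1/2 := by
    rw [hW0] at hV0; linear_combination hV0/2
  have hyyne : 2*Y0 - 2*(Y0*Y0) ≠ 0 := by
    rw [hy12]; norm_num
  have hdenT : Tendsto (fun t => 2*y t - 2*(y t*y t)) atInfty (𝓝 (2*Y0 - 2*(Y0*Y0))) :=
    (hyT.const_mul 2).sub ((hyT.mul hyT).const_mul 2)
  have hdne : ∀ᶠ t in atInfty, 2*y t - 2*(y t*y t) ≠ 0 := hdenT.eventually_ne hyyne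
  have hnum : Tendsto (fun t => x t * (2*y t - 2*(y t*y t))) atInfty
      (𝓝 (0 + (1-2*a2-2*a3-2*a4)*Y0 - a1)) := by
    have h1 : Tendsto (fun t => t * deriv y t + (1-2*a2-2*a3-2*a4)*y t - a1) atInfty
        (𝓝 (0 + (1-2*a2-2*a3-2*a4)*Y0 - a1)) :=
      ((hy0'.tendsto0).add (hyT.const_mul (1-2*a2-2*a3-2*a4))).sub tendsto_const_nhds
    apply Tendsto.congr' _ h1
    filter_upwards [heq2] with t h
    rw [h]; ring
  have hxT : Tendsto x atInfty
      (𝓝 ((0 + (1-2*a2-2*a3-2*a4)*Y0 - a1) * (2*Y0 - 2*(Y0*Y0))⁻¹)) := by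
    apply Tendsto.congr' _ (hnum.mul (Filter.Tendsto.inv₀ hdenT hyyne))
    filter_upwards [hdne] with t ht
    field_simp
    have h1 : y t * (1 - y t) ≠ 0 := by intro h; apply ht; linear_combination 2*h
    rw [mul_assoc]; exact mul_div_cancel_right₀ _ h1
  -- Conclusion.
  refine ⟨⟨r.toNat, by omega, Z, hZ, ?_⟩, ⟨_, hxT⟩, ⟨Y0, hyT⟩, ⟨W0, hwT⟩⟩
  have hfun : (fun t : ℂ => z t / t ^ (r.toNat : ℕ)) = fun t => z t / t^(r:ℤ) := by
    funext t
    rw [← zpow_natCast, Int.toNat_of_nonneg (by omega : (0:ℤ) ≤ r)]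
  rw [hfun]
  exact hzD
end
end

section
/- Let α0,α1,α2,α3,α4 be complex numbers with α0+α1+2α2+2α3+2α4=1, and let (x,y,z,w) be a solution of the Sasano system B4(α0,α1,α2,α3,α4) on a punctured neighborhood of t=0 such that x, y, z, w all extend holomorphically to t=0. Then x(0)=0 or x(0)=α0−α1. -/
open Filter Topology Polynomial

noncomputable section

/-- Auxiliary removable-singularity lemma: if `f` is differentiable on a punctured ball
around `0` and has a limit at `0`, then `t * deriv f t → 0` as `t → 0`. -/
lemma tendsto_mul_deriv_of_tendsto (f : ℂ → ℂ) (c : ℂ) (ε : ℝ) (hε : 0 < ε)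
    (hf : ∀ t : ℂ, t ≠ 0 → ‖t‖ < ε → DifferentiableAt ℂ f t)
    (hc : Tendsto f (𝓝[≠] (0:ℂ)) (𝓝 c)) :
    Tendsto (fun t => t * deriv f t) (𝓝[≠] (0:ℂ)) (𝓝 0) := by
  set F := Function.update f 0 c with hF
  have hFf : ∀ t : ℂ, t ≠ 0 → F t = f t := fun t ht => Function.update_of_ne ht _ _
  have hFeq : ∀ t : ℂ, t ≠ 0 → F =ᶠ[𝓝 t] f := fun t ht =>
    eventually_of_mem (isOpen_compl_singleton.mem_nhds ht) fun s hs => hFf s hs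
  have hFd : ∀ t : ℂ, t ≠ 0 → ‖t‖ < ε → DifferentiableAt ℂ F t := fun t ht hlt =>
    (hf t ht hlt).congr_of_eventuallyEq (hFeq t ht)
  have hFc : ContinuousAt F 0 := by
    refine continuousWithinAt_compl_self.mp ?_
    have h1 : Tendsto F (𝓝[≠] (0:ℂ)) (𝓝 c) :=
      hc.congr' (eventually_mem_nhdsWithin.mono fun t ht => (hFf t ht).symm)
    simpa [ContinuousWithinAt, hF, Function.update_self] using h1
  have hεnhds : ∀ᶠ t : ℂ in 𝓝 0, ‖t‖ < ε := by
    have : Tendsto (fun t : ℂ => ‖t‖) (𝓝 0) (𝓝 0) := by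
      simpa using (continuous_norm.tendsto (0:ℂ))
    exact this.eventually_lt_const hε
  have hFball : DifferentiableOn ℂ F (Metric.ball 0 ε) := by
    intro t ht
    rcases eq_or_ne t 0 with rfl | ht0
    · have hd : ∀ᶠ z in 𝓝[≠] (0:ℂ), DifferentiableAt ℂ F z := by
        filter_upwards [eventually_mem_nhdsWithin,
          hεnhds.filter_mono nhdsWithin_le_nhds] with z hz1 hz2
        exact hFd z hz1 hz2
      exact ((Complex.analyticAt_of_differentiable_on_punctured_nhds_of_continuousAt
        hd hFc).differentiableAt).differentiableWithinAt
    · have : ‖t‖ < ε := by simpa [Metric.mem_ball, dist_zero_right] using ht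
      exact (hFd t ht0 this).differentiableWithinAt
  have hAn : AnalyticOnNhd ℂ (deriv F) (Metric.ball 0 ε) :=
    (hFball.analyticOnNhd Metric.isOpen_ball).deriv
  have hcont : ContinuousAt (deriv F) 0 :=
    (hAn 0 (Metric.mem_ball_self hε)).continuousAt
  have h1 : Tendsto (fun t : ℂ => t * deriv F t) (𝓝 0) (𝓝 (0 * deriv F 0)) :=
    (continuousAt_id.mul hcont)
  rw [zero_mul] at h1
  refine (h1.mono_left nhdsWithin_le_nhds).congr' ?_
  filter_upwards [eventually_mem_nhdsWithin] with t ht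
  rw [Filter.EventuallyEq.deriv_eq (hFeq t ht)]

/-- For a solution of the Sasano system `B₄⁽¹⁾` on a punctured neighbourhood of `t = 0`
whose components all extend holomorphically to `t = 0`, the value of `x` at `0`
is `0` or `α₀ - α₁`. -/
theorem B4_holomorphic_at_zero_value_of_x (a0 a1 a2 a3 a4 : ℂ)
    (hsum : a0 + a1 + 2*a2 + 2*a3 + 2*a4 = 1) (ε : ℝ) (hε : 0 < ε)
    (x y z w : ℂ → ℂ)
    (hsol : SolvesB4On a0 a1 a2 a3 a4 x y z w {t : ℂ | t ≠ 0 ∧ ‖t‖ < ε})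
    (x0 : ℂ) (hx : Tendsto x (𝓝[≠] 0) (𝓝 x0))
    (hy : ∃ y0 : ℂ, Tendsto y (𝓝[≠] 0) (𝓝 y0))
    (hz : ∃ z0 : ℂ, Tendsto z (𝓝[≠] 0) (𝓝 z0))
    (hw : ∃ w0 : ℂ, Tendsto w (𝓝[≠] 0) (𝓝 w0)) :
    x0 = 0 ∨ x0 = a0 - a1 := by
  obtain ⟨y0, hy⟩ := hy
  obtain ⟨z0, hz⟩ := hz
  obtain ⟨w0, hw⟩ := hw
  have hεnhds : ∀ᶠ t : ℂ in 𝓝 0, ‖t‖ < ε := by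
    have : Tendsto (fun t : ℂ => ‖t‖) (𝓝 0) (𝓝 0) := by
      simpa using (continuous_norm.tendsto (0:ℂ))
    exact this.eventually_lt_const hε
  have hev : ∀ᶠ t : ℂ in 𝓝[≠] (0:ℂ), t ≠ 0 ∧ ‖t‖ < ε := by
    filter_upwards [eventually_mem_nhdsWithin,
      hεnhds.filter_mono nhdsWithin_le_nhds] with t h1 h2
    exact ⟨h1, h2⟩
  have hid : Tendsto (fun t : ℂ => t) (𝓝[≠] (0:ℂ)) (𝓝 0) :=
    tendsto_id.mono_left nhdsWithin_le_nhds
  -- limits of the four equations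
  have hdx : ∀ t : ℂ, t ≠ 0 → ‖t‖ < ε → DifferentiableAt ℂ x t :=
    fun t h1 h2 => (hsol t ⟨h1, h2⟩).1
  have hdy : ∀ t : ℂ, t ≠ 0 → ‖t‖ < ε → DifferentiableAt ℂ y t :=
    fun t h1 h2 => (hsol t ⟨h1, h2⟩).2.1
  have hdz : ∀ t : ℂ, t ≠ 0 → ‖t‖ < ε → DifferentiableAt ℂ z t :=
    fun t h1 h2 => (hsol t ⟨h1, h2⟩).2.2.1
  have hdw : ∀ t : ℂ, t ≠ 0 → ‖t‖ < ε → DifferentiableAt ℂ w t :=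
    fun t h1 h2 => (hsol t ⟨h1, h2⟩).2.2.2.1
  have hLx := tendsto_mul_deriv_of_tendsto x x0 ε hε hdx hx
  have hLy := tendsto_mul_deriv_of_tendsto y y0 ε hε hdy hy
  have hLz := tendsto_mul_deriv_of_tendsto z z0 ε hε hdz hz
  have hLw := tendsto_mul_deriv_of_tendsto w w0 ε hε hdw hw
  have E1 : 2 * x0 ^ 2 * y0 - x0 ^ 2 + (1 - 2*a2 - 2*a3 - 2*a4) * x0
      + 2 * a3 * z0 + 2 * z0 ^ 2 * w0 + 0 = 0 := by
    refine tendsto_nhds_unique ?_ hLx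
    have hR : Tendsto (fun t => 2 * x t ^ 2 * y t - x t ^ 2
        + (1 - 2*a2 - 2*a3 - 2*a4) * x t + 2 * a3 * z t + 2 * z t ^ 2 * w t + t)
        (𝓝[≠] (0:ℂ)) (𝓝 (2 * x0 ^ 2 * y0 - x0 ^ 2 + (1 - 2*a2 - 2*a3 - 2*a4) * x0
        + 2 * a3 * z0 + 2 * z0 ^ 2 * w0 + 0)) := by
      have h1 : Tendsto (fun t => 2 * x t ^ 2 * y t) (𝓝[≠] (0:ℂ)) (𝓝 (2 * x0 ^ 2 * y0)) :=
        (tendsto_const_nhds.mul (hx.pow 2)).mul hy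
      have h2 : Tendsto (fun t => x t ^ 2) (𝓝[≠] (0:ℂ)) (𝓝 (x0 ^ 2)) := hx.pow 2
      have h3 : Tendsto (fun t => (1 - 2*a2 - 2*a3 - 2*a4) * x t) (𝓝[≠] (0:ℂ))
          (𝓝 ((1 - 2*a2 - 2*a3 - 2*a4) * x0)) := tendsto_const_nhds.mul hx
      have h4 : Tendsto (fun t => 2 * a3 * z t) (𝓝[≠] (0:ℂ)) (𝓝 (2 * a3 * z0)) :=
        tendsto_const_nhds.mul hz
      have h5 : Tendsto (fun t => 2 * z t ^ 2 * w t) (𝓝[≠] (0:ℂ)) (𝓝 (2 * z0 ^ 2 * w0)) :=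
        (tendsto_const_nhds.mul (hz.pow 2)).mul hw
      exact ((((h1.sub h2).add h3).add h4).add h5).add hid
    refine hR.congr' ?_
    filter_upwards [hev] with t ht
    exact ((hsol t ht).2.2.2.2.1).symm
  have E2 : -2 * x0 * y0 ^ 2 + 2 * x0 * y0 - (1 - 2*a2 - 2*a3 - 2*a4) * y0 + a1 = 0 := by
    refine tendsto_nhds_unique ?_ hLy
    have hR : Tendsto (fun t => -2 * x t * y t ^ 2 + 2 * x t * y t
        - (1 - 2*a2 - 2*a3 - 2*a4) * y t + a1) (𝓝[≠] (0:ℂ))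
        (𝓝 (-2 * x0 * y0 ^ 2 + 2 * x0 * y0 - (1 - 2*a2 - 2*a3 - 2*a4) * y0 + a1)) := by
      have h1 : Tendsto (fun t => -2 * x t * y t ^ 2) (𝓝[≠] (0:ℂ)) (𝓝 (-2 * x0 * y0 ^ 2)) :=
        (tendsto_const_nhds.mul hx).mul (hy.pow 2)
      have h2 : Tendsto (fun t => 2 * x t * y t) (𝓝[≠] (0:ℂ)) (𝓝 (2 * x0 * y0)) :=
        (tendsto_const_nhds.mul hx).mul hy
      have h3 : Tendsto (fun t => (1 - 2*a2 - 2*a3 - 2*a4) * y t) (𝓝[≠] (0:ℂ))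
          (𝓝 ((1 - 2*a2 - 2*a3 - 2*a4) * y0)) := tendsto_const_nhds.mul hy
      exact ((h1.add h2).sub h3).add tendsto_const_nhds
    refine hR.congr' ?_
    filter_upwards [hev] with t ht
    exact ((hsol t ht).2.2.2.2.2.1).symm
  have E3 : 2 * z0 ^ 2 * w0 - z0 ^ 2 + (1 - 2*a4) * z0 + 2 * y0 * z0 ^ 2 + 0 = 0 := by
    refine tendsto_nhds_unique ?_ hLz
    have hR : Tendsto (fun t => 2 * z t ^ 2 * w t - z t ^ 2 + (1 - 2*a4) * z t
        + 2 * y t * z t ^ 2 + t) (𝓝[≠] (0:ℂ))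
        (𝓝 (2 * z0 ^ 2 * w0 - z0 ^ 2 + (1 - 2*a4) * z0 + 2 * y0 * z0 ^ 2 + 0)) := by
      have h1 : Tendsto (fun t => 2 * z t ^ 2 * w t) (𝓝[≠] (0:ℂ)) (𝓝 (2 * z0 ^ 2 * w0)) :=
        (tendsto_const_nhds.mul (hz.pow 2)).mul hw
      have h2 : Tendsto (fun t => z t ^ 2) (𝓝[≠] (0:ℂ)) (𝓝 (z0 ^ 2)) := hz.pow 2
      have h3 : Tendsto (fun t => (1 - 2*a4) * z t) (𝓝[≠] (0:ℂ))
          (𝓝 ((1 - 2*a4) * z0)) := tendsto_const_nhds.mul hz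
      have h4 : Tendsto (fun t => 2 * y t * z t ^ 2) (𝓝[≠] (0:ℂ))
          (𝓝 (2 * y0 * z0 ^ 2)) := (tendsto_const_nhds.mul hy).mul (hz.pow 2)
      exact (((h1.sub h2).add h3).add h4).add hid
    refine hR.congr' ?_
    filter_upwards [hev] with t ht
    exact ((hsol t ht).2.2.2.2.2.2.1).symm
  have E4 : -2 * z0 * w0 ^ 2 + 2 * z0 * w0 - (1 - 2*a4) * w0
      - 2 * a3 * y0 - 4 * y0 * z0 * w0 + a3 = 0 := by
    refine tendsto_nhds_unique ?_ hLw
    have hR : Tendsto (fun t => -2 * z t * w t ^ 2 + 2 * z t * w t - (1 - 2*a4) * w t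
        - 2 * a3 * y t - 4 * y t * z t * w t + a3) (𝓝[≠] (0:ℂ))
        (𝓝 (-2 * z0 * w0 ^ 2 + 2 * z0 * w0 - (1 - 2*a4) * w0
        - 2 * a3 * y0 - 4 * y0 * z0 * w0 + a3)) := by
      have h1 : Tendsto (fun t => -2 * z t * w t ^ 2) (𝓝[≠] (0:ℂ)) (𝓝 (-2 * z0 * w0 ^ 2)) :=
        (tendsto_const_nhds.mul hz).mul (hw.pow 2)
      have h2 : Tendsto (fun t => 2 * z t * w t) (𝓝[≠] (0:ℂ)) (𝓝 (2 * z0 * w0)) :=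
        (tendsto_const_nhds.mul hz).mul hw
      have h3 : Tendsto (fun t => (1 - 2*a4) * w t) (𝓝[≠] (0:ℂ))
          (𝓝 ((1 - 2*a4) * w0)) := tendsto_const_nhds.mul hw
      have h4 : Tendsto (fun t => 2 * a3 * y t) (𝓝[≠] (0:ℂ)) (𝓝 (2 * a3 * y0)) :=
        tendsto_const_nhds.mul hy
      have h5 : Tendsto (fun t => 4 * y t * z t * w t) (𝓝[≠] (0:ℂ))
          (𝓝 (4 * y0 * z0 * w0)) := ((tendsto_const_nhds.mul hy).mul hz).mul hw
      exact (((((h1.add h2).sub h3).sub h4).sub h5).add tendsto_const_nhds)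
    refine hR.congr' ?_
    filter_upwards [hev] with t ht
    exact ((hsol t ht).2.2.2.2.2.2.2).symm
  -- now pure algebra
  by_cases hm : (1:ℂ) - 2 * y0 = 0
  · -- y0 = 1/2 : E2 gives x0 = a0 - a1 directly
    right
    have hy0 : y0 = 1/2 := by linear_combination (-1/2 : ℂ) * hm
    rw [hy0] at E2
    linear_combination 2 * E2 - hsum
  · -- derive z0^2*w0 + a3*z0 = 0
    have hu : z0 ^ 2 * w0 + a3 * z0 = 0 := by
      by_cases hz0 : z0 = 0
      · rw [hz0]; ring
      · have hF3 : 2 * z0 * w0 - z0 + (1 - 2*a4) + 2 * y0 * z0 = 0 := by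
          have : z0 * (2 * z0 * w0 - z0 + (1 - 2*a4) + 2 * y0 * z0) = 0 := by
            linear_combination E3
          rcases mul_eq_zero.mp this with h | h
          · exact absurd h hz0
          · exact h
        have key : (1 - 2*y0) * (z0 * w0 + a3) = 0 := by
          linear_combination E4 + w0 * hF3
        have h2 : z0 * w0 + a3 = 0 := by
          rcases mul_eq_zero.mp key with h | h
          · exact absurd h hm
          · exact h
        linear_combination z0 * h2
    -- E1 factors
    have hfac : x0 * (2 * x0 * y0 - x0 + (a0 + a1)) = 0 := by
      linear_combination E1 - 2 * hu + x0 * hsum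
    rcases mul_eq_zero.mp hfac with h | h
    · exact Or.inl h
    · right
      have hxy : x0 * y0 + a1 = 0 := by
        linear_combination E2 + y0 * h - y0 * hsum
      linear_combination -h + 2 * hxy
end
end

section
/- Let α0,α1,α2,α3,α4 be complex numbers with α0+α1+2α2+2α3+2α4=1, let c ∈ ℂ with c ≠ 0, and let (x,y,z,w) be a solution of the Sasano system B4(α0,α1,α2,α3,α4) on a punctured neighborhood of t=c such that x, y, z, w are all meromorphic at t=c. Then the Hamiltonian H_{B4}(t) evaluated along the solution has a pole of order at most one at t=c, and Res_{t=c} H_{B4} ∈ {0, c, 3c}. -/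
open Filter Topology Polynomial

noncomputable section

/-- The Hamiltonian `H_{B₄⁽¹⁾}` evaluated along a solution `(x,y,z,w)`. -/
def HB4 (a1 a2 a3 a4 : ℂ) (x y z w : ℂ → ℂ) (t : ℂ) : ℂ :=
  x t ^ 2 * y t * (y t - 1) + x t * ((1 - 2*a2 - 2*a3 - 2*a4) * y t - a1) + t * y t
    + z t ^ 2 * w t * (w t - 1) + z t * ((1 - 2*a4) * w t - a3) + t * w t
    + 2 * y t * z t * (z t * w t + a3)
/-- `f` is meromorphic at `c`: after multiplication by some power of `(t - c)` it has a
finite limit as `t → c`. -/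
def MeroAt (f : ℂ → ℂ) (c : ℂ) : Prop :=
  ∃ (n : ℕ) (L : ℂ), Tendsto (fun t => (t - c) ^ n * f t) (𝓝[≠] c) (𝓝 L)


/-- `f` has Laurent tail order `≥ n` at `c`, with coefficient of `(t-c)^n` equal to `L`. -/
def HasLead (f : ℂ → ℂ) (c : ℂ) (n : ℤ) (L : ℂ) : Prop :=
  Tendsto (fun t => (t - c) ^ (-n) * f t) (𝓝[≠] c) (𝓝 L)

namespace HasLead

variable {f g : ℂ → ℂ} {c : ℂ} {n m : ℤ} {L M : ℂ}

lemma congr (hfg : f =ᶠ[𝓝[≠] c] g) (h : HasLead f c n L) : HasLead g c n L := by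
  refine h.congr' ?_
  filter_upwards [hfg] with t ht
  rw [ht]

lemma unique (h1 : HasLead f c n L) (h2 : HasLead f c n M) : L = M :=
  tendsto_nhds_unique h1 h2

lemma const (a c : ℂ) : HasLead (fun _ => a) c 0 a := by
  unfold HasLead
  simp only [neg_zero, zpow_zero, one_mul]
  exact tendsto_const_nhds

lemma mul (h1 : HasLead f c n L) (h2 : HasLead g c m M) :
    HasLead (fun t => f t * g t) c (n + m) (L * M) := by
  have h3 := Filter.Tendsto.mul h1 h2
  refine h3.congr' ?_
  filter_upwards [self_mem_nhdsWithin] with t ht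
  have h : (t : ℂ) - c ≠ 0 := sub_ne_zero.2 ht
  show (t - c) ^ (-n) * f t * ((t - c) ^ (-m) * g t) = (t - c) ^ (-(n+m)) * (f t * g t)
  rw [neg_add, zpow_add₀ h]; ring

lemma add (h1 : HasLead f c n L) (h2 : HasLead g c n M) :
    HasLead (fun t => f t + g t) c n (L + M) := by
  have := Filter.Tendsto.add h1 h2
  refine this.congr' ?_
  filter_upwards with t
  ring

lemma neg (h1 : HasLead f c n L) : HasLead (fun t => - f t) c n (-L) := by
  have := Filter.Tendsto.neg h1
  refine this.congr' ?_
  filter_upwards with t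
  ring

lemma sub (h1 : HasLead f c n L) (h2 : HasLead g c n M) :
    HasLead (fun t => f t - g t) c n (L - M) := by
  have h3 := h1.add h2.neg
  rw [sub_eq_add_neg]
  exact h3.congr (by filter_upwards with t; ring)

lemma cmul (a : ℂ) (h1 : HasLead f c n L) : HasLead (fun t => a * f t) c n (a * L) := by
  have := (const a c).mul h1
  simpa using this

/-- tendsto of positive powers of `t - c` to zero -/
lemma tendsto_zpow_zero {c : ℂ} {j : ℤ} (hj : 0 < j) :
    Tendsto (fun t : ℂ => (t - c) ^ j) (𝓝[≠] c) (𝓝 0) := by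
  have h0 : Tendsto (fun t : ℂ => (t - c) ^ j.toNat) (𝓝 c) (𝓝 0) := by
    have : Tendsto (fun t : ℂ => t - c) (𝓝 c) (𝓝 0) := by
      have h := ((continuous_id (X := ℂ)).sub (continuous_const (y := c))).tendsto c
      simpa [Pi.sub_def] using h
    have := this.pow j.toNat
    simpa [zero_pow (by omega : j.toNat ≠ 0)] using this
  have h1 : Tendsto (fun t : ℂ => (t - c) ^ j.toNat) (𝓝[≠] c) (𝓝 0) :=
    h0.mono_left nhdsWithin_le_nhds
  refine h1.congr' ?_
  filter_upwards [self_mem_nhdsWithin] with t ht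
  rw [← zpow_natCast, Int.toNat_of_nonneg hj.le]

lemma down (h : HasLead f c n L) (hm : m < n) : HasLead f c m 0 := by
  have hpow := tendsto_zpow_zero (c := c) (j := n - m) (by omega)
  have := hpow.mul h
  rw [zero_mul] at this
  refine this.congr' ?_
  filter_upwards [self_mem_nhdsWithin] with t ht
  have h0 : (t : ℂ) - c ≠ 0 := sub_ne_zero.2 ht
  rw [← mul_assoc, ← zpow_add₀ h0]
  ring_nf

lemma lt_zero (h1 : HasLead f c n L) (h2 : HasLead f c m M) (hnm : m < n) : M = 0 :=
  ((h1.down hnm).unique h2).symm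

lemma zero_fun (h : f =ᶠ[𝓝[≠] c] 0) (n : ℤ) : HasLead f c n 0 := by
  have : HasLead (fun _ : ℂ => (0:ℂ)) c n 0 := by
    unfold HasLead
    simp only [mul_zero]
    exact tendsto_const_nhds
  exact this.congr (by filter_upwards [h] with t ht; simp [ht])

lemma monomial (c : ℂ) (j : ℤ) : HasLead (fun t => (t - c) ^ j) c j 1 := by
  unfold HasLead
  have : (fun t : ℂ => (t - c) ^ (-j) * (t - c) ^ j) =ᶠ[𝓝[≠] c] fun _ => (1:ℂ) := by
    filter_upwards [self_mem_nhdsWithin] with t ht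
    have h0 : (t : ℂ) - c ≠ 0 := sub_ne_zero.2 ht
    rw [← zpow_add₀ h0]; simp
  exact tendsto_const_nhds.congr' this.symm

lemma id_self (c : ℂ) : HasLead (fun t => t) c 0 c := by
  unfold HasLead
  simp only [neg_zero, zpow_zero, one_mul]
  have : Tendsto (fun t : ℂ => t) (𝓝 c) (𝓝 c) := tendsto_id
  exact this.mono_left nhdsWithin_le_nhds

/-- a representation of shape `(t-c)^k * g t` with `g` analytic gives a `HasLead`. -/
lemma of_rep {g : ℂ → ℂ} {k : ℤ} (hg : AnalyticAt ℂ g c)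
    (hfg : f =ᶠ[𝓝[≠] c] fun t => (t - c) ^ k * g t) : HasLead f c k (g c) := by
  have hcont : Tendsto g (𝓝[≠] c) (𝓝 (g c)) :=
    (hg.continuousAt.tendsto).mono_left nhdsWithin_le_nhds
  refine hcont.congr' ?_
  filter_upwards [hfg, self_mem_nhdsWithin] with t ht h0
  have h0' : (t : ℂ) - c ≠ 0 := sub_ne_zero.2 h0
  rw [ht, ← mul_assoc, ← zpow_add₀ h0']
  simp

end HasLead

section MeroInfra

variable {f g : ℂ → ℂ} {c : ℂ} {n m k : ℤ} {L M : ℂ}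

/-- Case analysis for a meromorphic germ: it is eventually zero, or has an exact order
representation. -/
lemma mero_cases (hf : MeromorphicAt f c) :
    (f =ᶠ[𝓝[≠] c] 0) ∨ ∃ (k : ℤ) (g : ℂ → ℂ), AnalyticAt ℂ g c ∧ g c ≠ 0 ∧
      f =ᶠ[𝓝[≠] c] fun t => (t - c) ^ k * g t := by
  rcases eq_or_ne (meromorphicOrderAt f c) ⊤ with h | h
  · exact Or.inl (meromorphicOrderAt_eq_top_iff.1 h)
  · obtain ⟨k, hk⟩ := WithTop.ne_top_iff_exists.1 h
    obtain ⟨g, hg, hgc, hrep⟩ := (meromorphicOrderAt_eq_int_iff hf).1 hk.symm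
    refine Or.inr ⟨k, g, hg, hgc, ?_⟩
    filter_upwards [hrep] with t ht
    simpa [smul_eq_mul] using ht

lemma analyticAt_deriv (hg : AnalyticAt ℂ g c) : AnalyticAt ℂ (deriv g) c := by
  have h1 : AnalyticOnNhd ℂ g {y | AnalyticAt ℂ g y} := fun y hy => hy
  exact h1.deriv c hg

lemma le_of_rep (hg : AnalyticAt ℂ g c) (hgc : g c ≠ 0)
    (hrep : f =ᶠ[𝓝[≠] c] fun t => (t - c) ^ k * g t)
    (h : HasLead f c n L) : n ≤ k := by
  by_contra hlt
  push_neg at hlt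
  have h1 : HasLead f c k (g c) := HasLead.of_rep hg hrep
  exact hgc ((h.down hlt).unique h1).symm

lemma deriv_eventuallyEq (h : f =ᶠ[𝓝[≠] c] g) : deriv f =ᶠ[𝓝[≠] c] deriv g := by
  obtain ⟨U, hUo, hcU, hU⟩ := mem_nhdsWithin.1 h
  have : ∀ᶠ t in 𝓝[≠] c, deriv f t = deriv g t := by
    rw [eventually_nhdsWithin_iff]
    filter_upwards [hUo.mem_nhds hcU] with t htU htc
    have hmem : U ∩ {c}ᶜ ∈ 𝓝 t :=
      (hUo.inter isOpen_compl_singleton).mem_nhds ⟨htU, htc⟩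
    have heq : f =ᶠ[𝓝 t] g := by
      filter_upwards [hmem] with s hs
      exact hU ⟨hs.1, hs.2⟩
    exact heq.deriv_eq
  exact this

lemma hl_deriv (hf : MeromorphicAt f c) (h : HasLead f c n L) :
    HasLead (deriv f) c (n - 1) (n * L) := by
  rcases mero_cases hf with h0 | ⟨k, g, hg, hgc, hrep⟩
  · have hL : L = 0 := h.unique (HasLead.zero_fun h0 n)
    have h0' : f =ᶠ[𝓝[≠] c] (fun _ => (0:ℂ)) := h0
    have hd : deriv f =ᶠ[𝓝[≠] c] deriv (fun _ => (0:ℂ)) := deriv_eventuallyEq h0'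
    have : deriv f =ᶠ[𝓝[≠] c] 0 := by
      filter_upwards [hd] with t ht
      rw [ht, deriv_const]
      rfl
    simpa [hL] using HasLead.zero_fun this (n - 1)
  · have hk : n ≤ k := le_of_rep hg hgc hrep h
    -- representation of the derivative
    have hgd : Filter.EventuallyEq (𝓝[≠] c) (deriv f) (fun t =>
        (k : ℂ) * ((t - c) ^ (k - 1) * g t) + (t - c) ^ k * deriv g t) := by
      have hev : ∀ᶠ t in 𝓝[≠] c, AnalyticAt ℂ g t :=
        hg.eventually_analyticAt.filter_mono nhdsWithin_le_nhds
      filter_upwards [deriv_eventuallyEq hrep, hev, self_mem_nhdsWithin] with t h1 h2 h3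
      rw [h1]
      have hne : (t : ℂ) - c ≠ 0 := sub_ne_zero.2 h3
      have hd1 : HasDerivAt (fun s : ℂ => (s - c) ^ k) ((k : ℂ) * (t - c) ^ (k - 1)) t := by
        have hzp := hasDerivAt_zpow k (t - c) (Or.inl hne)
        have hsub : HasDerivAt (fun s : ℂ => s - c) 1 t := (hasDerivAt_id t).sub_const c
        have := HasDerivAt.comp t hzp hsub
        simpa [Function.comp_def] using this
      have hd2 : HasDerivAt g (_root_.deriv g t) t := h2.differentiableAt.hasDerivAt
      have := (hd1.mul hd2).deriv
      rw [show (fun t => (t - c) ^ k * g t) = (fun s : ℂ => (s - c) ^ k) * g from rfl, this]; ring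
    have hterm1 : HasLead (fun t => (k : ℂ) * ((t - c) ^ (k - 1) * g t)) c (k - 1)
        ((k : ℂ) * g c) :=
      HasLead.cmul _ (HasLead.of_rep hg EventuallyEq.rfl)
    have hterm2 : HasLead (fun t => (t - c) ^ k * deriv g t) c k (_root_.deriv g c) :=
      HasLead.of_rep (analyticAt_deriv hg) EventuallyEq.rfl
    rcases eq_or_lt_of_le hk with heq | hlt
    · -- n = k
      have hL : L = g c := h.unique (HasLead.of_rep hg (heq ▸ hrep))
      have hsum := hterm1.add (hterm2.down (by omega))
      rw [add_zero] at hsum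
      have : HasLead (deriv f) c (k - 1) ((k : ℂ) * g c) := hsum.congr hgd.symm
      rw [heq, hL]
      exact this
    · -- n < k : L = 0
      have hL : L = 0 := (((HasLead.of_rep hg hrep).down hlt).unique h).symm
      have hsum := (hterm1.down (by omega : n - 1 < k - 1)).add (hterm2.down (by omega))
      rw [add_zero] at hsum
      have : HasLead (deriv f) c (n - 1) 0 := hsum.congr hgd.symm
      simpa [hL] using this

lemma HasLead.promote (hf : MeromorphicAt f c) (h : HasLead f c n 0) :
    ∃ M, HasLead f c (n + 1) M := by
  rcases mero_cases hf with h0 | ⟨k, g, hg, hgc, hrep⟩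
  · exact ⟨0, HasLead.zero_fun h0 (n + 1)⟩
  · have hk : n ≤ k := le_of_rep hg hgc hrep h
    have hk' : n < k := by
      rcases eq_or_lt_of_le hk with heq | hlt
      · exact absurd (h.unique (HasLead.of_rep hg (heq ▸ hrep))).symm hgc
      · exact hlt
    rcases eq_or_lt_of_le (by omega : n + 1 ≤ k) with heq | hlt
    · exact ⟨g c, HasLead.of_rep hg (heq ▸ hrep)⟩
    · exact ⟨0, (HasLead.of_rep hg hrep).down hlt⟩

end MeroInfra

namespace HasLead

variable {f : ℂ → ℂ} {c : ℂ} {n m : ℤ} {L M : ℂ}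

lemma of_eq (h : HasLead f c n L) (hn : n = m) (hL : L = M) : HasLead f c m M := by
  subst hn; subst hL; exact h

lemma order_eq (h1 : HasLead f c n L) (hL : L ≠ 0) (h2 : HasLead f c m M) (hM : M ≠ 0) :
    n = m := by
  rcases lt_trichotomy n m with h | h | h
  · exact absurd ((h2.down h).unique h1).symm hL
  · exact h
  · exact absurd ((h1.down h).unique h2).symm hM

/-- `HasLead` at any order `≤` the exact order, with the obvious coefficient. -/
lemma at_le (h : HasLead f c n L) (hm : m ≤ n) : HasLead f c m (if m = n then L else 0) := by
  rcases eq_or_lt_of_le hm with he | hlt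
  · subst he; simpa using h
  · simp only [if_neg (by omega : ¬ m = n)]
    exact h.down hlt

end HasLead

lemma balance_eq {F G : ℂ → ℂ} {c : ℂ} {μ : ℤ} {A B : ℂ}
    (hFG : ∀ᶠ t in 𝓝[≠] c, F t = G t)
    (hF : HasLead F c μ A) (hG : HasLead G c μ B) : A = B :=
  (hF.congr hFG).unique hG

section KeyLemma

open HasLead

/-- E3-analysis: if `z` is analytic of order `e ≥ 0` and `v = y + w` has a pole of
order `≥ 2`, then `e ≥ 1`, the pole order of `v` is exactly `2e`, and the leading
coefficient satisfies an explicit relation. -/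
lemma lemE3 (c d : ℂ) (hc : c ≠ 0) (z v : ℂ → ℂ) (mz : MeromorphicAt z c)
    (e kv : ℤ) (Z Vt : ℂ → ℂ) (hZ : AnalyticAt ℂ Z c) (hZc : Z c ≠ 0)
    (hzrep : z =ᶠ[𝓝[≠] c] fun t => (t - c) ^ e * Z t)
    (hV : AnalyticAt ℂ Vt c) (hVc : Vt c ≠ 0)
    (hvrep : v =ᶠ[𝓝[≠] c] fun t => (t - c) ^ kv * Vt t)
    (hkv : kv ≤ -2) (he : 0 ≤ e)
    (hG : ∀ᶠ t in 𝓝[≠] c, t * deriv z t - d * z t - t = z t * z t * (2 * v t - 1)) :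
    1 ≤ e ∧ kv = -2*e ∧ (e = 1 → c * Z c - c = 2 * Z c ^ 2 * Vt c) ∧
      (2 ≤ e → -c = 2 * Z c ^ 2 * Vt c) := by
  set γ := Z c with hγ
  set V := Vt c with hVdef
  have hlz : HasLead z c e γ := HasLead.of_rep hZ hzrep
  have hlv : HasLead v c kv V := HasLead.of_rep hV hvrep
  have hlL0 : HasLead (fun t => t * deriv z t) c (e - 1) (c * ((e : ℂ) * γ)) := by
    have h := (HasLead.id_self c).mul (hl_deriv mz hlz)
    exact h.of_eq (by omega) rfl
  have hlu : HasLead (fun t => 2 * v t - 1) c kv (2 * V) := by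
    have h1 := HasLead.cmul 2 hlv
    have h2 := (HasLead.const 1 c).down (show kv < 0 by omega)
    exact (h1.sub h2).of_eq rfl (by ring)
  have hlzz : HasLead (fun t => z t * z t * (2 * v t - 1)) c (e + e + kv) (γ * γ * (2 * V)) :=
    (hlz.mul hlz).mul hlu
  -- build F at an order μ below everything relevant
  have hFgen : ∀ μ : ℤ, μ ≤ e - 1 → μ ≤ 0 →
      HasLead (fun t => t * deriv z t - d * z t - t) c μ
        ((if μ = e - 1 then c * ((e:ℂ) * γ) else 0) - (if μ = e then d * γ else 0)
          - (if μ = 0 then c else 0)) := by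
    intro μ h1 h2
    have ha := hlL0.at_le h1
    have hb := (HasLead.cmul d hlz).at_le (by omega : μ ≤ e)
    have hct := (HasLead.id_self c).at_le h2
    exact (ha.sub hb).sub hct
  -- Step (a): kv ≥ -2e
  have hstep_a : -2*e ≤ kv := by
    by_contra hcon
    push_neg at hcon
    have hμ1 : e + e + kv ≤ e - 1 := by omega
    have hμ1' : e + e + kv < e - 1 ∨ e + e + kv = e - 1 := by omega
    have hF := hFgen (e + e + kv) hμ1 (by omega)
    have hbal := balance_eq hG hF hlzz
    have h1 : ¬ (e + e + kv = e - 1) := by omega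
    have h2 : ¬ (e + e + kv = e) := by omega
    have h3 : ¬ (e + e + kv = 0) := by omega
    rw [if_neg h1, if_neg h2, if_neg h3] at hbal
    have : γ * γ * (2 * V) = 0 := by linear_combination -hbal
    have hne : γ * γ * (2 * V) ≠ 0 := by
      apply mul_ne_zero (mul_ne_zero hZc hZc)
      simpa using hVc
    exact hne this
  have he1 : 1 ≤ e := by omega
  -- Step (c): kv = -2e
  have hstep_c : kv = -2*e := by
    by_contra hcon
    have he2 : 2 ≤ e := by omega
    have hF := hFgen 0 (by omega) le_rfl
    have hR := hlzz.down (by omega : (0:ℤ) < e + e + kv)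
    have hbal := balance_eq hG hF hR
    rw [if_neg (by omega : ¬ (0:ℤ) = e - 1), if_neg (by omega : ¬ (0:ℤ) = e),
      if_pos rfl] at hbal
    exact hc (by linear_combination -hbal)
  refine ⟨he1, hstep_c, ?_, ?_⟩
  · intro he'
    have hF := hFgen 0 (by omega) le_rfl
    have hR : HasLead (fun t => z t * z t * (2 * v t - 1)) c 0 (γ * γ * (2 * V)) :=
      hlzz.of_eq (by omega) rfl
    have hbal := balance_eq hG hF hR
    rw [if_pos (by omega : (0:ℤ) = e - 1), if_neg (by omega : ¬ (0:ℤ) = e),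
      if_pos rfl] at hbal
    rw [he'] at hbal
    push_cast at hbal
    linear_combination hbal
  · intro he'
    have hF := hFgen 0 (by omega) le_rfl
    have hR : HasLead (fun t => z t * z t * (2 * v t - 1)) c 0 (γ * γ * (2 * V)) :=
      hlzz.of_eq (by omega) rfl
    have hbal := balance_eq hG hF hR
    rw [if_neg (by omega : ¬ (0:ℤ) = e - 1), if_neg (by omega : ¬ (0:ℤ) = e),
      if_pos rfl] at hbal
    linear_combination hbal

/-- E2-analysis: at a pole of `y` of order `q = -ky ≥ 2`, the function `x` is analytic
with a zero of exact order `q - 1`, and the leading coefficients are related. -/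
lemma lemA (c b a1 : ℂ) (hc : c ≠ 0) (x y : ℂ → ℂ)
    (mx : MeromorphicAt x c) (my : MeromorphicAt y c)
    (ky : ℤ) (Y : ℂ → ℂ) (hY : AnalyticAt ℂ Y c) (hYc : Y c ≠ 0)
    (hyrep : y =ᶠ[𝓝[≠] c] fun t => (t - c) ^ ky * Y t) (hky : ky ≤ -2)
    (hE2 : ∀ᶠ t in 𝓝[≠] c, t * deriv y t = -2*x t*y t^2 + 2*x t*y t - b*y t + a1) :
    ∃ (px : ℤ) (X : ℂ → ℂ), AnalyticAt ℂ X c ∧ X c ≠ 0 ∧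
      (x =ᶠ[𝓝[≠] c] fun t => (t - c) ^ px * X t) ∧ px = -ky - 1 ∧
      c * ky * Y c = -2 * X c * Y c ^ 2 := by
  set B := Y c with hB
  have hly : HasLead y c ky B := HasLead.of_rep hY hyrep
  have hkyC : (ky : ℂ) ≠ 0 := Int.cast_ne_zero.mpr (by omega)
  have hlLy : HasLead (fun t => t * deriv y t) c (ky - 1) (c * ((ky : ℂ) * B)) := by
    have h := (HasLead.id_self c).mul (hl_deriv my hly)
    exact h.of_eq (by omega) rfl
  rcases mero_cases mx with hx0 | ⟨px, X, hX, hXc, hxrep⟩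
  · exfalso
    have hE2' : ∀ᶠ t in 𝓝[≠] c, t * deriv y t = (-b) * y t + a1 := by
      filter_upwards [hE2, hx0] with t h1 h2
      rw [h1]
      have : x t = 0 := h2
      rw [this]; ring
    have hR : HasLead (fun t => (-b) * y t + a1) c (ky - 1) (0 + 0) :=
      ((HasLead.cmul (-b) hly).down (by omega)).add
        ((HasLead.const a1 c).down (by omega))
    have hbal := balance_eq hE2' hlLy hR
    rw [add_zero] at hbal
    exact hkyC (by
      have h1 : c * ((ky:ℂ) * B) = 0 := hbal
      rcases mul_eq_zero.1 h1 with h | h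
      · exact absurd h hc
      · rcases mul_eq_zero.1 h with h' | h'
        · exact h'
        · exact absurd h' hYc)
  · set a := X c with ha
    have hlx : HasLead x c px a := HasLead.of_rep hX hxrep
    have hT1 := HasLead.cmul (-2) (hlx.mul (hly.mul hly))
    have hT2 := HasLead.cmul 2 (hlx.mul hly)
    have hT3 := HasLead.cmul (-b) hly
    have hT4 := HasLead.const a1 c
    have hE2' : ∀ᶠ t in 𝓝[≠] c, t * deriv y t =
        (-2) * (x t * (y t * y t)) + 2 * (x t * y t) + (-b) * y t + a1 := by
      filter_upwards [hE2] with t ht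
      rw [ht]; ring
    have hRgen : ∀ μ : ℤ, μ ≤ px + (ky + ky) → μ ≤ px + ky → μ ≤ ky → μ ≤ 0 →
        HasLead (fun t => (-2) * (x t * (y t * y t)) + 2 * (x t * y t) + (-b) * y t + a1) c μ
          ((if μ = px + (ky + ky) then -2 * (a * (B * B)) else 0)
            + (if μ = px + ky then 2 * (a * B) else 0)
            + (if μ = ky then -b * B else 0) + (if μ = 0 then a1 else 0)) :=
      fun μ h1 h2 h3 h4 =>
        (((hT1.at_le h1).add (hT2.at_le h2)).add (hT3.at_le h3)).add (hT4.at_le h4)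
    have haB2 : -2 * (a * (B * B)) ≠ 0 := by
      intro h
      rcases mul_eq_zero.1 h with h' | h'
      · norm_num at h'
      · rcases mul_eq_zero.1 h' with h'' | h''
        · exact hXc h''
        · rcases mul_eq_zero.1 h'' with h3 | h3 <;> exact hYc h3
    have hpx : px = -ky - 1 := by
      rcases lt_trichotomy px (-ky - 1) with hlt | heq | hgt
      · exfalso
        have hR := hRgen (px + (ky + ky)) le_rfl (by omega) (by omega) (by omega)
        have hL := hlLy.at_le (by omega : px + (ky + ky) ≤ ky - 1)
        have hbal := balance_eq hE2' hL hR
        rw [if_neg (by omega : ¬ px + (ky + ky) = ky - 1), if_pos rfl,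
          if_neg (by omega : ¬ px + (ky + ky) = px + ky),
          if_neg (by omega : ¬ px + (ky + ky) = ky),
          if_neg (by omega : ¬ px + (ky + ky) = 0)] at hbal
        exact haB2 (by linear_combination -hbal)
      · exact heq
      · exfalso
        have hR := hRgen (ky - 1) (by omega) (by omega) (by omega) (by omega)
        have hL := hlLy
        have hbal := balance_eq hE2' hL hR
        rw [if_neg (by omega : ¬ ky - 1 = px + (ky + ky)),
          if_neg (by omega : ¬ ky - 1 = px + ky),
          if_neg (by omega : ¬ ky - 1 = ky),
          if_neg (by omega : ¬ ky - 1 = 0)] at hbal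
        simp only [add_zero] at hbal
        rcases mul_eq_zero.1 hbal with h | h
        · exact hc h
        · rcases mul_eq_zero.1 h with h' | h'
          · exact hkyC h'
          · exact hYc h'
    have hrel : c * ky * B = -2 * a * B ^ 2 := by
      have hR := hRgen (ky - 1) (by omega) (by omega) (by omega) (by omega)
      have hbal := balance_eq hE2' hlLy hR
      rw [if_pos (by omega : ky - 1 = px + (ky + ky)),
        if_neg (by omega : ¬ ky - 1 = px + ky),
        if_neg (by omega : ¬ ky - 1 = ky),
        if_neg (by omega : ¬ ky - 1 = 0)] at hbal
      linear_combination hbal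
    exact ⟨px, X, hX, hXc, hxrep, hpx, hrel⟩

/-- E4-analysis when `y` has at worst a simple pole: then `e = 1` and the leading
coefficient of `y + w` is `-c`. -/
lemma tameCase (c d a3 : ℂ) (hc : c ≠ 0) (y z w : ℂ → ℂ)
    (mw : MeromorphicAt w c)
    (e : ℤ) (γ V Y₁ : ℂ) (hγ : γ ≠ 0) (hV : V ≠ 0) (he1 : 1 ≤ e)
    (hlz : HasLead z c e γ)
    (hlv : HasLead (fun t => y t + w t) c (-2*e) V)
    (hly1 : HasLead y c (-1) Y₁)
    (hlyLow : ∀ μ : ℤ, μ ≤ -2 → HasLead y c μ 0)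
    (hrel1 : e = 1 → c * γ - c = 2 * γ ^ 2 * V)
    (hE4 : ∀ᶠ t in 𝓝[≠] c, t * deriv w t =
      -2*z t*w t^2 + 2*z t*w t - d*w t - 2*a3*y t - 4*y t*z t*w t + a3) :
    e = 1 ∧ V = -c := by
  have hw : HasLead w c (-2*e) V := by
    have h := (hlv.sub (hlyLow (-2*e) (by omega))).of_eq rfl (by ring)
    exact h.congr (Filter.Eventually.of_forall (fun t => by ring))
  have hE4' : ∀ᶠ t in 𝓝[≠] c, t * deriv w t =
      (-2) * (z t * (w t * w t)) + 2 * (z t * w t) + (-d) * w t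
        + (-2*a3) * y t + (-4) * (y t * (z t * w t)) + a3 := by
    filter_upwards [hE4] with t ht
    rw [ht]; ring
  have A1 := HasLead.cmul (-2) (hlz.mul (hw.mul hw))
  have A2 := HasLead.cmul 2 (hlz.mul hw)
  have A3 := HasLead.cmul (-d) hw
  have A5 := HasLead.cmul (-4) (hly1.mul (hlz.mul hw))
  have A6 := HasLead.const a3 c
  have hRgen : ∀ μ : ℤ, μ ≤ e + (-2*e + -2*e) → μ ≤ e + -2*e → μ ≤ -2*e → μ ≤ -2 →
      μ ≤ -1 + (e + -2*e) → μ ≤ 0 →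
      HasLead (fun t => (-2) * (z t * (w t * w t)) + 2 * (z t * w t) + (-d) * w t
        + (-2*a3) * y t + (-4) * (y t * (z t * w t)) + a3) c μ
        ((if μ = e + (-2*e + -2*e) then -2 * (γ * (V * V)) else 0)
          + (if μ = e + -2*e then 2 * (γ * V) else 0)
          + (if μ = -2*e then -d * V else 0) + (-2*a3) * 0
          + (if μ = -1 + (e + -2*e) then -4 * (Y₁ * (γ * V)) else 0)
          + (if μ = 0 then a3 else 0)) := by
    intro μ h1 h2 h3 h4 h5 h6
    exact ((((A1.at_le h1).add (A2.at_le h2)).add (A3.at_le h3)).add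
      (HasLead.cmul (-2*a3) (hlyLow μ h4))).add (A5.at_le h5) |>.add (A6.at_le h6)
  have hLw : HasLead (fun t => t * deriv w t) c (-2*e - 1) (c * (((-2*e : ℤ) : ℂ) * V)) := by
    have h := (HasLead.id_self c).mul (hl_deriv mw hw)
    exact h.of_eq (by omega) rfl
  have he' : e = 1 := by
    by_contra hcon
    have he2 : 2 ≤ e := by omega
    have hR := hRgen (e + (-2*e + -2*e)) le_rfl (by omega) (by omega) (by omega)
      (by omega) (by omega)
    have hL := hLw.down (by omega : e + (-2*e + -2*e) < -2*e - 1)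
    have hbal := balance_eq hE4' hL hR
    rw [if_pos rfl, if_neg (by omega : ¬ e + (-2*e + -2*e) = e + -2*e),
      if_neg (by omega : ¬ e + (-2*e + -2*e) = -2*e),
      if_neg (by omega : ¬ e + (-2*e + -2*e) = -1 + (e + -2*e)),
      if_neg (by omega : ¬ e + (-2*e + -2*e) = 0)] at hbal
    have : γ * (V * V) = 0 := by linear_combination (1/2) * hbal
    rcases mul_eq_zero.1 this with h | h
    · exact hγ h
    · rcases mul_eq_zero.1 h with h' | h' <;> exact hV h'
  have hR := hRgen (e + (-2*e + -2*e)) le_rfl (by omega) (by omega) (by omega)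
    (by omega) (by omega)
  have hL := hLw.of_eq (by omega : -2*e - 1 = e + (-2*e + -2*e)) rfl
  have hbal := balance_eq hE4' hL hR
  rw [if_pos rfl, if_neg (by omega : ¬ e + (-2*e + -2*e) = e + -2*e),
    if_neg (by omega : ¬ e + (-2*e + -2*e) = -2*e),
    if_neg (by omega : ¬ e + (-2*e + -2*e) = -1 + (e + -2*e)),
    if_neg (by omega : ¬ e + (-2*e + -2*e) = 0)] at hbal
  rw [he'] at hbal
  push_cast at hbal
  -- hbal : c * (-2 * V) = -2 * (γ * (V * V)) + 0 + 0 + (-2*a3)*0 + 0 + 0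
  have hgV : γ * V = c := by
    have h2 : V * (γ * V - c) = 0 := by linear_combination (1/2) * hbal
    rcases mul_eq_zero.1 h2 with h | h
    · exact absurd h hV
    · exact sub_eq_zero.1 h
  have hrel1' := hrel1 he'
  have hγ1 : γ = -1 := by
    have h3 : c * (γ + 1) = 0 := by linear_combination -hrel1' - 2*γ*hgV
    rcases mul_eq_zero.1 h3 with h | h
    · exact absurd h hc
    · linear_combination h
  refine ⟨he', ?_⟩
  rw [hγ1] at hgV
  linear_combination -hgV

/-- E1/E2/E4-analysis when `y` has a pole of order `≥ 2`. -/
lemma poleCase (c b d a1 a3 : ℂ) (hc : c ≠ 0) (x y z w : ℂ → ℂ)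
    (mx : MeromorphicAt x c) (my : MeromorphicAt y c) (mw : MeromorphicAt w c)
    (e kv ky : ℤ) (γ V : ℂ) (Y : ℂ → ℂ)
    (hγ : γ ≠ 0) (hV : V ≠ 0) (he1 : 1 ≤ e)
    (hY : AnalyticAt ℂ Y c) (hYc : Y c ≠ 0)
    (hyrep : y =ᶠ[𝓝[≠] c] fun t => (t - c) ^ ky * Y t) (hky : ky ≤ -2)
    (hkv : kv = -2*e)
    (hlz : HasLead z c e γ)
    (hlv : HasLead (fun t => y t + w t) c kv V)
    (hrel1 : e = 1 → c * γ - c = 2 * γ ^ 2 * V)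
    (hrel2 : 2 ≤ e → -c = 2 * γ ^ 2 * V)
    (hE1 : ∀ᶠ t in 𝓝[≠] c, t * deriv x t =
      2*x t^2*y t - x t^2 + b*x t + 2*a3*z t + 2*z t^2*w t + t)
    (hE2 : ∀ᶠ t in 𝓝[≠] c, t * deriv y t = -2*x t*y t^2 + 2*x t*y t - b*y t + a1)
    (hE4 : ∀ᶠ t in 𝓝[≠] c, t * deriv w t =
      -2*z t*w t^2 + 2*z t*w t - d*w t - 2*a3*y t - 4*y t*z t*w t + a3) :
    e = 1 ∧ (V = -c ∨ V = -3*c) := by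
  set B := Y c with hB
  have hly : HasLead y c ky B := HasLead.of_rep hY hyrep
  obtain ⟨px, X, hX, hXc, hxrep, hpx, hrelA⟩ :=
    lemA c b a1 hc x y mx my ky Y hY hYc hyrep hky hE2
  set a := X c with ha
  have hlx : HasLead x c px a := HasLead.of_rep hX hxrep
  -- E1 in normalised shape
  have hE1' : ∀ᶠ t in 𝓝[≠] c, t * deriv x t =
      2 * ((x t * x t) * y t) + (-1) * (x t * x t) + b * x t + (2*a3) * z t
        + 2 * ((z t * z t) * w t) + t := by
    filter_upwards [hE1] with t ht
    rw [ht]; ring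
  have hE4' : ∀ᶠ t in 𝓝[≠] c, t * deriv w t =
      (-2) * (z t * (w t * w t)) + 2 * (z t * w t) + (-d) * w t
        + (-2*a3) * y t + (-4) * (y t * (z t * w t)) + a3 := by
    filter_upwards [hE4] with t ht
    rw [ht]; ring
  have hLx : HasLead (fun t => t * deriv x t) c (px - 1) (c * ((px : ℂ) * a)) := by
    have h := (HasLead.id_self c).mul (hl_deriv mx hlx)
    exact h.of_eq (by omega) rfl
  have B1 := HasLead.cmul 2 ((hlx.mul hlx).mul hly)
  have B2 := HasLead.cmul (-1) (hlx.mul hlx)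
  have B3 := HasLead.cmul b hlx
  have B4 := HasLead.cmul (2*a3) hlz
  have B6 := HasLead.id_self c
  rcases lt_trichotomy ky kv with hlt | heq | hgt
  · -- ky < kv : contradiction via E1 at order e + e + ky
    exfalso
    have hwB : HasLead w c ky (0 - B) := by
      have h := (hlv.down hlt).sub hly
      exact h.congr (Filter.Eventually.of_forall (fun t => by ring))
    have B5 := HasLead.cmul 2 ((hlz.mul hlz).mul hwB)
    have hR := ((((B1.at_le (by omega : e+e+ky ≤ px+px+ky)).add
        (B2.at_le (by omega : e+e+ky ≤ px+px))).add
        (B3.at_le (by omega : e+e+ky ≤ px))).add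
        (B4.at_le (by omega : e+e+ky ≤ e))).add
        (B5.at_le (by omega : e+e+ky ≤ e+e+ky)) |>.add
        (B6.at_le (by omega : e+e+ky ≤ 0))
    have hL := hLx.down (by omega : e+e+ky < px - 1)
    have hbal := balance_eq hE1' hL hR
    rw [if_neg (by omega : ¬ e+e+ky = px+px+ky), if_neg (by omega : ¬ e+e+ky = px+px),
      if_neg (by omega : ¬ e+e+ky = px), if_neg (by omega : ¬ e+e+ky = e),
      if_pos rfl, if_neg (by omega : ¬ e+e+ky = 0)] at hbal
    have hzero : γ * γ * B = 0 := by linear_combination (1/2) * hbal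
    rcases mul_eq_zero.1 hzero with h | h
    · rcases mul_eq_zero.1 h with h' | h' <;> exact hγ h'
    · exact hYc h
  · -- ky = kv, main case
    have hwVB : HasLead w c kv (V - B) := by
      have h := hlv.sub (hly.of_eq heq rfl)
      exact h.congr (Filter.Eventually.of_forall (fun t => by ring))
    have B5 := HasLead.cmul 2 ((hlz.mul hlz).mul hwVB)
    have hR1 := ((((B1.at_le (by omega : (0:ℤ) ≤ px+px+ky)).add
        (B2.at_le (by omega : (0:ℤ) ≤ px+px))).add
        (B3.at_le (by omega : (0:ℤ) ≤ px))).add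
        (B4.at_le (by omega : (0:ℤ) ≤ e))).add
        (B5.at_le (by omega : (0:ℤ) ≤ e+e+kv)) |>.add (B6.at_le le_rfl)
    have hL1 := hLx.at_le (by omega : (0:ℤ) ≤ px - 1)
    have hbal1 := balance_eq hE1' hL1 hR1
    rw [if_neg (by omega : ¬ (0:ℤ) = px+px), if_neg (by omega : ¬ (0:ℤ) = px),
      if_neg (by omega : ¬ (0:ℤ) = e), if_pos (by omega : (0:ℤ) = e+e+kv),
      if_pos rfl] at hbal1
    by_cases he2 : 2 ≤ e
    · -- contradiction
      exfalso
      rw [if_neg (by omega : ¬ (0:ℤ) = px - 1),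
        if_neg (by omega : ¬ (0:ℤ) = px+px+ky)] at hbal1
      have h2 := hrel2 he2
      have hzero : γ * γ * B = 0 := by linear_combination (1/2) * hbal1 - (1/2) * h2
      rcases mul_eq_zero.1 hzero with h | h
      · rcases mul_eq_zero.1 h with h' | h' <;> exact hγ h'
      · exact hYc h
    · -- e = 1 : the two nontrivial pole patterns
      have he' : e = 1 := by omega
      subst he'
      refine ⟨rfl, ?_⟩
      have hky2 : ky = -2 := by omega
      subst hky2
      have hkv2 : kv = -2 := by omega
      subst hkv2
      have hpx1 : px = 1 := by omega
      subst hpx1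
      rw [if_pos (by norm_num : (0:ℤ) = 1 - 1),
        if_pos (by norm_num : (0:ℤ) = 1+1+(-2))] at hbal1
      push_cast at hbal1
      -- relation from lemA
      have hrelA' : c * (-2 : ℂ) * B = -2 * a * B ^ 2 := by
        have hcast : ((-2 : ℤ) : ℂ) = -2 := by norm_cast
        calc c * (-2:ℂ) * B = c * ((-2:ℤ):ℂ) * B := by rw [hcast]
        _ = -2 * a * B ^ 2 := hrelA
      have haB : a * B = c := by
        have h2 : B * (a * B - c) = 0 := by linear_combination (1/2) * hrelA'
        rcases mul_eq_zero.1 h2 with h | h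
        · exact absurd h hYc
        · exact sub_eq_zero.1 h
      -- E4 balance at order -3
      have hLw : HasLead (fun t => t * deriv w t) c (-2 - 1)
          (c * (((-2 : ℤ) : ℂ) * (V - B))) := by
        have h := (HasLead.id_self c).mul (hl_deriv mw hwVB)
        exact h.of_eq (by omega) rfl
      have A1 := HasLead.cmul (-2) (hlz.mul (hwVB.mul hwVB))
      have A2 := HasLead.cmul 2 (hlz.mul hwVB)
      have A3 := HasLead.cmul (-d) hwVB
      have A4 := HasLead.cmul (-2*a3) hly
      have A5 := HasLead.cmul (-4) (hly.mul (hlz.mul hwVB))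
      have A6 := HasLead.const a3 c
      have hR4 := ((((A1.at_le (by omega : -3 ≤ 1 + (-2 + -2))).add
          (A2.at_le (by omega : -3 ≤ 1 + -2))).add
          (A3.at_le (by omega : (-3:ℤ) ≤ -2))).add
          (A4.at_le (by omega : (-3:ℤ) ≤ -2))).add
          (A5.at_le (by omega : -3 ≤ -2 + (1 + -2))) |>.add
          (A6.at_le (by omega : (-3:ℤ) ≤ 0))
      have hL4 := hLw.of_eq (by omega : (-2) - 1 = -3) rfl
      have hbal4 := balance_eq hE4' hL4 hR4
      rw [if_pos (by norm_num : (-3:ℤ) = 1 + (-2 + -2)),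
        if_neg (by norm_num : ¬ (-3:ℤ) = 1 + -2),
        if_neg (by norm_num : ¬ (-3:ℤ) = -2),
        if_pos (by norm_num : (-3:ℤ) = -2 + (1 + -2)),
        if_neg (by norm_num : ¬ (-3:ℤ) = 0)] at hbal4
      push_cast at hbal4
      -- the structural relations
      have hstar : c * γ - c = 2 * γ ^ 2 * V := hrel1 rfl
      have hS1 : 2 * γ^2 * (V - B) = -(c*a) - c := by
        linear_combination -hbal1 - 2*a*haB
      have hR5 : 2 * γ^2 * B = c*γ + c*a := by linear_combination -hstar - hS1
      have hfac : (V - B) * (c - γ*(V - B) - 2*B*γ) = 0 := by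
        linear_combination (-1/2) * hbal4
      rcases mul_eq_zero.1 hfac with hVB | hC
      · -- V = B, residue c
        left
        have hVB' : V = B := sub_eq_zero.1 hVB
        have hca : c * (a + 1) = 0 := by
          linear_combination -hstar - hR5 - 2*γ^2*hVB'
        have ha1 : a = -1 := by
          rcases mul_eq_zero.1 hca with h | h
          · exact absurd h hc
          · linear_combination h
        have hBc : B = -c := by linear_combination -haB + B*ha1
        rw [hVB', hBc]
      · -- c = γ(V+B), residue 3c (or impossible)
        have hCc : c = γ * (V + B) := by linear_combination hC
        have h2gB : 2*γ^2*(V+B) = 2*γ*c := by linear_combination -2*γ*hCc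
        have hsum : 2*γ^2*(V+B) = 2*c*γ + c*a - c := by linear_combination -hstar + hR5
        have h3 : c * (a - 1) = 0 := by linear_combination h2gB - hsum
        have ha1 : a = 1 := by
          rcases mul_eq_zero.1 h3 with h | h
          · exact absurd h hc
          · linear_combination h
        have hBc : B = c := by linear_combination haB - B*ha1
        have hq : c * ((γ - 1) * (2*γ + 1)) = 0 := by
          linear_combination hR5 - 2*γ^2*hBc + c*ha1
        rcases mul_eq_zero.1 hq with h | h
        · exact absurd h hc
        rcases mul_eq_zero.1 h with h' | h'
        · -- γ = 1 : impossible (V = 0)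
          exfalso
          have hγ' : γ = 1 := by linear_combination h'
          rw [hγ'] at hstar
          have hV0 : V = 0 := by linear_combination (-1/2) * hstar
          exact hV hV0
        · -- γ = -1/2 : V = -3c
          right
          have hγ' : γ = -(1/2) := by linear_combination (1/2) * h'
          rw [hγ'] at hstar
          linear_combination -2*hstar
  · -- kv < ky : contradiction via E4 at order e + (kv + kv)
    exfalso
    have he2 : 2 ≤ e := by omega
    have hwV : HasLead w c kv V := by
      have h := (hlv.sub (hly.down hgt)).of_eq rfl (by ring)
      exact h.congr (Filter.Eventually.of_forall (fun t => by ring))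
    have hLw : HasLead (fun t => t * deriv w t) c (kv - 1) (c * ((kv : ℂ) * V)) := by
      have h := (HasLead.id_self c).mul (hl_deriv mw hwV)
      exact h.of_eq (by omega) rfl
    have A1 := HasLead.cmul (-2) (hlz.mul (hwV.mul hwV))
    have A2 := HasLead.cmul 2 (hlz.mul hwV)
    have A3 := HasLead.cmul (-d) hwV
    have A4 := HasLead.cmul (-2*a3) hly
    have A5 := HasLead.cmul (-4) (hly.mul (hlz.mul hwV))
    have A6 := HasLead.const a3 c
    have hR := ((((A1.at_le (by omega : e+(kv+kv) ≤ e+(kv+kv))).add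
        (A2.at_le (by omega : e+(kv+kv) ≤ e+kv))).add
        (A3.at_le (by omega : e+(kv+kv) ≤ kv))).add
        (A4.at_le (by omega : e+(kv+kv) ≤ ky))).add
        (A5.at_le (by omega : e+(kv+kv) ≤ ky+(e+kv))) |>.add
        (A6.at_le (by omega : e+(kv+kv) ≤ 0))
    have hL := hLw.down (by omega : e+(kv+kv) < kv - 1)
    have hbal := balance_eq hE4' hL hR
    rw [if_pos rfl, if_neg (by omega : ¬ e+(kv+kv) = e+kv),
      if_neg (by omega : ¬ e+(kv+kv) = kv), if_neg (by omega : ¬ e+(kv+kv) = ky),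
      if_neg (by omega : ¬ e+(kv+kv) = ky+(e+kv)), if_neg (by omega : ¬ e+(kv+kv) = 0)]
      at hbal
    have hzero : γ * (V * V) = 0 := by linear_combination (1/2) * hbal
    rcases mul_eq_zero.1 hzero with h | h
    · exact hγ h
    · rcases mul_eq_zero.1 h with h' | h' <;> exact hV h'

/-- Main classification: along a meromorphic solution of the system, `y + w` has a pole of
order at most 2 at `c`, with `(t-c)^{-2}`-coefficient in `{0, -c, -3c}`. -/
lemma key (b d a1 a3 c : ℂ) (hc : c ≠ 0) (x y z w : ℂ → ℂ)
    (mx : MeromorphicAt x c) (my : MeromorphicAt y c)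
    (mz : MeromorphicAt z c) (mw : MeromorphicAt w c)
    (hE1 : ∀ᶠ t in 𝓝[≠] c, t * deriv x t =
      2*x t^2*y t - x t^2 + b*x t + 2*a3*z t + 2*z t^2*w t + t)
    (hE2 : ∀ᶠ t in 𝓝[≠] c, t * deriv y t = -2*x t*y t^2 + 2*x t*y t - b*y t + a1)
    (hE3 : ∀ᶠ t in 𝓝[≠] c, t * deriv z t = 2*z t^2*w t - z t^2 + d*z t + 2*y t*z t^2 + t)
    (hE4 : ∀ᶠ t in 𝓝[≠] c, t * deriv w t =
      -2*z t*w t^2 + 2*z t*w t - d*w t - 2*a3*y t - 4*y t*z t*w t + a3) :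
    ∃ lam : ℂ, (lam = 0 ∨ lam = -c ∨ lam = -3*c) ∧
      HasLead (fun t => y t + w t) c (-2) lam := by
  have hG : ∀ᶠ t in 𝓝[≠] c, t * deriv z t - d * z t - t =
      z t * z t * (2 * (y t + w t) - 1) := by
    filter_upwards [hE3] with t ht
    rw [ht]; ring
  rcases mero_cases mz with hz0 | ⟨e, Z, hZ, hZc, hzrep⟩
  · -- z ≡ 0 : impossible since the equation has the inhomogeneous term t
    exfalso
    have hz0' : z =ᶠ[𝓝[≠] c] (fun _ => (0:ℂ)) := hz0
    have hdz := deriv_eventuallyEq hz0'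
    have hev : (fun t : ℂ => t) =ᶠ[𝓝[≠] c] (fun _ => (0:ℂ)) := by
      filter_upwards [hE3, hdz, hz0'] with t h1 h2 h3
      have hzt : z t = 0 := h3
      have hdzt : deriv z t = 0 := by rw [h2]; exact deriv_const t 0
      rw [hzt, hdzt] at h1
      simpa using h1.symm
    have h0 : HasLead (fun t : ℂ => t) c 0 0 := HasLead.zero_fun hev 0
    exact hc ((HasLead.id_self c).unique h0)
  · set γ := Z c with hγdef
    have hlz : HasLead z c e γ := HasLead.of_rep hZ hzrep
    by_cases hepole : e ≤ -1
    · -- z has a pole: then y + w is analytic and lam = 0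
      refine ⟨0, Or.inl rfl, ?_⟩
      have mu : MeromorphicAt (fun t => 2*(y t + w t) - 1) c := by
        have h := ((MeromorphicAt.const 2 c).mul (my.add mw)).sub (MeromorphicAt.const 1 c)
        exact h
      have hlF : HasLead (fun t => t * deriv z t - d * z t - t) c (e-1)
          (c*((e:ℂ)*γ) - 0 - 0) := by
        have h1 : HasLead (fun t => t * deriv z t) c (e-1) (c*((e:ℂ)*γ)) :=
          ((HasLead.id_self c).mul (hl_deriv mz hlz)).of_eq (by omega) rfl
        exact (h1.sub ((HasLead.cmul d hlz).down (by omega))).sub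
          ((HasLead.id_self c).down (by omega))
      have hegz : c*((e:ℂ)*γ) - 0 - 0 ≠ 0 := by
        simp only [sub_zero]
        exact mul_ne_zero hc (mul_ne_zero (Int.cast_ne_zero.mpr (by omega)) hZc)
      rcases mero_cases mu with hu0 | ⟨j, U, hU, hUc, hurep⟩
      · exfalso
        have hR0 : (fun t => z t * z t * (2*(y t + w t) - 1)) =ᶠ[𝓝[≠] c] 0 := by
          filter_upwards [hu0] with t ht
          have h4 : 2*(y t + w t) - 1 = 0 := ht
          show z t * z t * (2*(y t + w t) - 1) = 0
          rw [h4, mul_zero]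
        exact hegz (balance_eq hG hlF (HasLead.zero_fun hR0 (e-1)))
      · have hlu : HasLead (fun t => 2*(y t + w t) - 1) c j (U c) :=
          HasLead.of_rep hU hurep
        have hlRHS : HasLead (fun t => z t * z t * (2*(y t + w t) - 1)) c (e+e+j)
            (γ*γ*U c) := ((hlz.mul hlz).mul hlu).of_eq (by omega) rfl
        have hlF' := hlF.congr hG
        have horder := hlF'.order_eq hegz hlRHS
          (mul_ne_zero (mul_ne_zero hZc hZc) hUc)
        have hj : 0 ≤ j := by omega
        have hu2 : HasLead (fun t => 2*(y t + w t) - 1) c (-2) 0 := hlu.down (by omega)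
        have h12 := HasLead.cmul (1/2) (hu2.add ((HasLead.const 1 c).down (by omega)))
        have h13 : HasLead (fun t => y t + w t) c (-2) ((1/2 : ℂ) * (0 + 0)) :=
          h12.congr (Filter.Eventually.of_forall (fun t => by ring))
        exact h13.of_eq rfl (by norm_num)
    · -- z analytic
      have he0 : 0 ≤ e := by omega
      have mv : MeromorphicAt (fun t => y t + w t) c := my.add mw
      rcases mero_cases mv with hv0 | ⟨kv, Vt, hVan, hVc, hvrep⟩
      · exact ⟨0, Or.inl rfl, HasLead.zero_fun hv0 (-2)⟩
      · by_cases hkv1 : -1 ≤ kv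
        · exact ⟨0, Or.inl rfl, (HasLead.of_rep hVan hvrep).down (by omega)⟩
        · have hkv : kv ≤ -2 := by omega
          obtain ⟨he1, hkve, hrel1, hrel2⟩ := lemE3 c d hc z (fun t => y t + w t) mz e kv
            Z Vt hZ hZc hzrep hVan hVc hvrep hkv he0 hG
          set V := Vt c with hVdef
          have hlv : HasLead (fun t => y t + w t) c kv V := HasLead.of_rep hVan hvrep
          rcases mero_cases my with hy0 | ⟨ky, Y, hYan, hYc2, hyrep⟩
          · -- y ≡ 0 : tame case
            obtain ⟨he'1, hVval⟩ := tameCase c d a3 hc y z w mw e γ V 0 hZc hVc he1 hlz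
              (hlv.of_eq (by omega) rfl) (HasLead.zero_fun hy0 (-1))
              (fun μ _ => HasLead.zero_fun hy0 μ) hrel1 hE4
            exact ⟨V, Or.inr (Or.inl hVval), hlv.of_eq (by omega) rfl⟩
          · by_cases hky1 : -1 ≤ ky
            · -- y has at worst a simple pole : tame case
              have hly : HasLead y c ky (Y c) := HasLead.of_rep hYan hyrep
              obtain ⟨he'1, hVval⟩ := tameCase c d a3 hc y z w mw e γ V _ hZc hVc he1 hlz
                (hlv.of_eq (by omega) rfl) (hly.at_le hky1)
                (fun μ hμ => hly.down (by omega)) hrel1 hE4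
              exact ⟨V, Or.inr (Or.inl hVval), hlv.of_eq (by omega) rfl⟩
            · -- y has a pole of order ≥ 2
              have hky : ky ≤ -2 := by omega
              obtain ⟨he'1, hVval⟩ := poleCase c b d a1 a3 hc x y z w mx my mw e kv ky γ V Y
                hZc hVc he1 hYan hYc2 hyrep hky hkve hlz hlv hrel1 hrel2 hE1 hE2 hE4
              refine ⟨V, ?_, hlv.of_eq (by omega) rfl⟩
              rcases hVval with h | h
              · exact Or.inr (Or.inl h)
              · exact Or.inr (Or.inr h)

end KeyLemma

section Final

/-- A function meromorphic in the naive sense and differentiable on a punctured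
neighbourhood is `MeromorphicAt`. -/
lemma meroAt_meromorphicAt {f : ℂ → ℂ} {c : ℂ}
    (hf : ∃ (n : ℕ) (L : ℂ), Filter.Tendsto (fun t => (t - c) ^ n * f t) (𝓝[≠] c) (𝓝 L))
    (hd : ∀ᶠ t in 𝓝[≠] c, DifferentiableAt ℂ f t) : MeromorphicAt f c := by
  obtain ⟨n, L, hL⟩ := hf
  refine ⟨n + 1, ?_⟩
  apply Complex.analyticAt_of_differentiable_on_punctured_nhds_of_continuousAt
  · filter_upwards [hd] with t ht
    exact ((differentiableAt_id.sub (differentiableAt_const c)).pow (n+1)).smul ht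
  · have h0 : Filter.Tendsto (fun t : ℂ => t - c) (𝓝[≠] c) (𝓝 0) := by
      have h := ((continuous_id.sub (continuous_const (y := c))).tendsto c).mono_left
        (nhdsWithin_le_nhds (s := {c}ᶜ))
      simpa [Pi.sub_def] using h
    have h1 : Filter.Tendsto (fun t => (t - c) * ((t - c) ^ n * f t)) (𝓝[≠] c)
        (𝓝 (0 * L)) := h0.mul hL
    have h2 : Filter.Tendsto (fun t => (t - c) ^ (n+1) • f t) (𝓝[≠] c) (𝓝 0) := by
      rw [show (0:ℂ) = 0 * L by ring]
      refine h1.congr' ?_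
      filter_upwards with t
      simp only [smul_eq_mul, pow_succ]
      ring
    have h3 : ((c : ℂ) - c) ^ (n+1) • f c = 0 := by
      simp [sub_self, zero_pow (Nat.succ_ne_zero n)]
    rw [← continuousWithinAt_compl_self]
    unfold ContinuousWithinAt
    have hg : (fun z : ℂ => (z - c) ^ (n + 1) • f z) c = 0 := h3
    rw [hg]
    exact h2

/-- The derivative of the Hamiltonian along a solution is `y + w`. -/
lemma derivH (a1 a2 a3 a4 : ℂ) (x y z w : ℂ → ℂ) (t : ℂ) (ht0 : t ≠ 0)
    (hdx : DifferentiableAt ℂ x t) (hdy : DifferentiableAt ℂ y t)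
    (hdz : DifferentiableAt ℂ z t) (hdw : DifferentiableAt ℂ w t)
    (h1 : t * deriv x t = 2*x t^2*y t - x t^2 + (1 - 2*a2 - 2*a3 - 2*a4)*x t
      + 2*a3*z t + 2*z t^2*w t + t)
    (h2 : t * deriv y t = -2*x t*y t^2 + 2*x t*y t - (1 - 2*a2 - 2*a3 - 2*a4)*y t + a1)
    (h3 : t * deriv z t = 2*z t^2*w t - z t^2 + (1 - 2*a4)*z t + 2*y t*z t^2 + t)
    (h4 : t * deriv w t = -2*z t*w t^2 + 2*z t*w t - (1 - 2*a4)*w t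
      - 2*a3*y t - 4*y t*z t*w t + a3) :
    HasDerivAt (HB4 a1 a2 a3 a4 x y z w) (y t + w t) t := by
  set x' := deriv x t with hx'
  set y' := deriv y t with hy'
  set z' := deriv z t with hz'
  set w' := deriv w t with hw'
  have hX : HasDerivAt x x' t := hdx.hasDerivAt
  have hY : HasDerivAt y y' t := hdy.hasDerivAt
  have hZ : HasDerivAt z z' t := hdz.hasDerivAt
  have hW : HasDerivAt w w' t := hdw.hasDerivAt
  have hid : HasDerivAt (fun s : ℂ => s) 1 t := hasDerivAt_id t
  have t1 := ((hX.pow 2).mul hY).mul (hY.sub_const 1)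
  have t2 := hX.mul ((hY.const_mul (1 - 2*a2 - 2*a3 - 2*a4)).sub_const a1)
  have t3 := hid.mul hY
  have t4 := ((hZ.pow 2).mul hW).mul (hW.sub_const 1)
  have t5 := hZ.mul ((hW.const_mul (1 - 2*a4)).sub_const a3)
  have t6 := hid.mul hW
  have t7 := (((hY.const_mul 2).mul hZ).mul ((hZ.mul hW).add_const a3))
  have hchain := (((((t1.add t2).add t3).add t4).add t5).add t6).add t7
  have hH : HasDerivAt (HB4 a1 a2 a3 a4 x y z w) (y t + w t) t := by
    refine hchain.congr_deriv ?_
    symm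
    apply mul_left_cancel₀ ht0
    simp only [Pi.pow_apply, Pi.mul_apply]
    push_cast
    linear_combination
      (-(2*x t*y t*(y t - 1) + (1 - 2*a2 - 2*a3 - 2*a4)*y t - a1)) * h1
      + (-(x t^2*(2*y t - 1) + (1 - 2*a2 - 2*a3 - 2*a4)*x t + t
          + 2*z t*(z t*w t + a3))) * h2
      + (-(2*z t*w t*(w t - 1) + (1 - 2*a4)*w t - a3 + 2*y t*(2*z t*w t + a3))) * h3
      + (-(z t^2*(2*w t - 1) + (1 - 2*a4)*z t + t + 2*y t*z t^2)) * h4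
  exact hH

end Final


/-- Along a solution of the Sasano system `B₄⁽¹⁾` meromorphic at `c ≠ 0`, the Hamiltonian
has a pole of order at most one at `c`, with residue `0`, `c` or `3c`. -/
theorem B4_hamiltonian_residue_at_nonzero_point (a0 a1 a2 a3 a4 : ℂ)
    (hsum : a0 + a1 + 2*a2 + 2*a3 + 2*a4 = 1) (c : ℂ) (hc : c ≠ 0)
    (ε : ℝ) (hε : 0 < ε) (x y z w : ℂ → ℂ)
    (hsol : SolvesB4On a0 a1 a2 a3 a4 x y z w {t : ℂ | t ≠ c ∧ ‖t - c‖ < ε})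
    (hx : MeroAt x c) (hy : MeroAt y c) (hz : MeroAt z c) (hw : MeroAt w c) :
    ∃ (r : ℂ) (g : ℂ → ℂ), (r = 0 ∨ r = c ∨ r = 3*c) ∧ AnalyticAt ℂ g c ∧
      ∀ᶠ t in 𝓝[≠] c, HB4 a1 a2 a3 a4 x y z w t = r / (t - c) + g t := by
  have hball : ∀ᶠ t in 𝓝 c, ‖t - c‖ < ε := by
    filter_upwards [Metric.ball_mem_nhds c hε] with t ht
    simpa [Metric.mem_ball, dist_eq_norm] using ht
  have hmem : ∀ᶠ t in 𝓝[≠] c, t ∈ {t : ℂ | t ≠ c ∧ ‖t - c‖ < ε} := by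
    filter_upwards [hball.filter_mono nhdsWithin_le_nhds, self_mem_nhdsWithin] with t h1 h2
    exact ⟨h2, h1⟩
  have hdx : ∀ᶠ t in 𝓝[≠] c, DifferentiableAt ℂ x t := by
    filter_upwards [hmem] with t ht; exact (hsol t ht).1
  have hdy : ∀ᶠ t in 𝓝[≠] c, DifferentiableAt ℂ y t := by
    filter_upwards [hmem] with t ht; exact (hsol t ht).2.1
  have hdz : ∀ᶠ t in 𝓝[≠] c, DifferentiableAt ℂ z t := by
    filter_upwards [hmem] with t ht; exact (hsol t ht).2.2.1
  have hdw : ∀ᶠ t in 𝓝[≠] c, DifferentiableAt ℂ w t := by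
    filter_upwards [hmem] with t ht; exact (hsol t ht).2.2.2.1
  have hE1 : ∀ᶠ t in 𝓝[≠] c, t * deriv x t = 2*x t^2*y t - x t^2
      + (1 - 2*a2 - 2*a3 - 2*a4)*x t + 2*a3*z t + 2*z t^2*w t + t := by
    filter_upwards [hmem] with t ht; exact (hsol t ht).2.2.2.2.1
  have hE2 : ∀ᶠ t in 𝓝[≠] c, t * deriv y t = -2*x t*y t^2 + 2*x t*y t
      - (1 - 2*a2 - 2*a3 - 2*a4)*y t + a1 := by
    filter_upwards [hmem] with t ht; exact (hsol t ht).2.2.2.2.2.1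
  have hE3 : ∀ᶠ t in 𝓝[≠] c, t * deriv z t = 2*z t^2*w t - z t^2
      + (1 - 2*a4)*z t + 2*y t*z t^2 + t := by
    filter_upwards [hmem] with t ht; exact (hsol t ht).2.2.2.2.2.2.1
  have hE4 : ∀ᶠ t in 𝓝[≠] c, t * deriv w t = -2*z t*w t^2 + 2*z t*w t
      - (1 - 2*a4)*w t - 2*a3*y t - 4*y t*z t*w t + a3 := by
    filter_upwards [hmem] with t ht; exact (hsol t ht).2.2.2.2.2.2.2
  have mx : MeromorphicAt x c := meroAt_meromorphicAt hx hdx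
  have my : MeromorphicAt y c := meroAt_meromorphicAt hy hdy
  have mz : MeromorphicAt z c := meroAt_meromorphicAt hz hdz
  have mw : MeromorphicAt w c := meroAt_meromorphicAt hw hdw
  obtain ⟨lam, hlamcase, hlv⟩ := key (1 - 2*a2 - 2*a3 - 2*a4) (1 - 2*a4) a1 a3 c hc
    x y z w mx my mz mw hE1 hE2 hE3 hE4
  have hne0 : ∀ᶠ t in 𝓝[≠] c, t ≠ (0:ℂ) := by
    have h : {(0:ℂ)}ᶜ ∈ 𝓝 c := isOpen_compl_singleton.mem_nhds (by simpa using hc)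
    filter_upwards [nhdsWithin_le_nhds h] with t ht
    exact ht
  have hHd : ∀ᶠ t in 𝓝[≠] c, HasDerivAt (HB4 a1 a2 a3 a4 x y z w) (y t + w t) t := by
    filter_upwards [hmem, hne0] with t ht ht0
    obtain ⟨h1, h2, h3, h4, e1, e2, e3, e4⟩ := hsol t ht
    exact derivH a1 a2 a3 a4 x y z w t ht0 h1 h2 h3 h4 e1 e2 e3 e4
  have mH : MeromorphicAt (HB4 a1 a2 a3 a4 x y z w) c := by
    exact ((((((((mx.pow 2).mul my).mul (my.sub (MeromorphicAt.const 1 c))).add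
      (mx.mul (((MeromorphicAt.const (1 - 2*a2 - 2*a3 - 2*a4) c).mul my).sub
        (MeromorphicAt.const a1 c)))).add
      ((MeromorphicAt.id c).mul my)).add
      (((mz.pow 2).mul mw).mul (mw.sub (MeromorphicAt.const 1 c)))).add
      (mz.mul (((MeromorphicAt.const (1 - 2*a4) c).mul mw).sub
        (MeromorphicAt.const a3 c)))).add
      ((MeromorphicAt.id c).mul mw)).add
      ((((MeromorphicAt.const 2 c).mul my).mul mz).mul
        ((mz.mul mw).add (MeromorphicAt.const a3 c)))
  have mK : MeromorphicAt (fun t => HB4 a1 a2 a3 a4 x y z w t + lam * (t - c)⁻¹) c :=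
    mH.add ((MeromorphicAt.const lam c).mul
      (((MeromorphicAt.id c).sub (MeromorphicAt.const c c)).inv))
  have hKd : ∀ᶠ t in 𝓝[≠] c,
      HasDerivAt (fun t => HB4 a1 a2 a3 a4 x y z w t + lam * (t - c)⁻¹)
        ((y t + w t) + lam * -(((t - c)^2)⁻¹)) t := by
    filter_upwards [hHd, self_mem_nhdsWithin] with t h1 h2
    have hne : t - c ≠ 0 := sub_ne_zero.2 h2
    have hinv : HasDerivAt (fun s : ℂ => (s - c)⁻¹) (-(((t - c)^2)⁻¹)) t := by
      have h3 := hasDerivAt_inv hne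
      have h4 := h3.comp t ((hasDerivAt_id t).sub_const c)
      simpa [Function.comp_def] using h4
    exact h1.add (hinv.const_mul lam)
  have hKderiv : ∀ᶠ t in 𝓝[≠] c,
      deriv (fun t => HB4 a1 a2 a3 a4 x y z w t + lam * (t - c)⁻¹) t
        = (y t + w t) + lam * -(((t - c)^2)⁻¹) := by
    filter_upwards [hKd] with t h; exact h.deriv
  have hmono' : HasLead (fun t : ℂ => lam * -(((t - c)^2)⁻¹)) c (-2) (lam * -1) := by
    have hmono : HasLead (fun t : ℂ => lam * -((t - c) ^ (-2 : ℤ))) c (-2) (lam * -1) :=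
      HasLead.cmul lam (HasLead.monomial c (-2)).neg
    refine hmono.congr (Filter.Eventually.of_forall (fun t => ?_))
    have h5 : ((t - c : ℂ)) ^ (-2 : ℤ) = ((t - c)^2)⁻¹ := by
      rw [zpow_neg, zpow_two, pow_two]
    rw [h5]
  have hlK0 : HasLead (deriv (fun t => HB4 a1 a2 a3 a4 x y z w t + lam * (t - c)⁻¹)) c
      (-2) 0 := by
    have h : HasLead (fun t => (y t + w t) + lam * -(((t - c)^2)⁻¹)) c (-2) 0 :=
      (hlv.add hmono').of_eq rfl (by ring)
    exact h.congr (by filter_upwards [hKderiv] with t ht; exact ht.symm)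
  have mdK : MeromorphicAt
      (deriv (fun t => HB4 a1 a2 a3 a4 x y z w t + lam * (t - c)⁻¹)) c := by
    have hm : MeromorphicAt (fun t => (y t + w t) + lam * -(((t - c)^2)⁻¹)) c :=
      (my.add mw).add ((MeromorphicAt.const lam c).mul
        ((((MeromorphicAt.id c).sub (MeromorphicAt.const c c)).pow 2).inv.neg))
    exact hm.congr (by filter_upwards [hKderiv] with t ht; exact ht.symm)
  obtain ⟨ρ, hρ⟩ := HasLead.promote mdK hlK0
  have hrcase : (-lam = 0 ∨ -lam = c ∨ -lam = 3*c) := by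
    rcases hlamcase with h | h | h
    · left; rw [h, neg_zero]
    · right; left; rw [h, neg_neg]
    · right; right; rw [h]; ring
  rcases mero_cases mK with hK0 | ⟨kk, G, hGan, hGc, hKrep⟩
  · refine ⟨-lam, fun _ => 0, hrcase, analyticAt_const, ?_⟩
    filter_upwards [hK0, self_mem_nhdsWithin] with t ht htc
    have h : HB4 a1 a2 a3 a4 x y z w t + lam * (t - c)⁻¹ = 0 := ht
    rw [div_eq_mul_inv]
    linear_combination h
  · have hlK : HasLead (fun t => HB4 a1 a2 a3 a4 x y z w t + lam * (t - c)⁻¹) c kk (G c) :=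
      HasLead.of_rep hGan hKrep
    have hkk : 0 ≤ kk := by
      by_contra hneg
      push_neg at hneg
      have hd := hl_deriv mK hlK
      have h0 := (hρ.down (by omega : kk - 1 < -1)).unique hd
      have hne : (kk:ℂ) * G c ≠ 0 :=
        mul_ne_zero (Int.cast_ne_zero.mpr (by omega)) hGc
      exact hne h0.symm
    refine ⟨-lam, fun t => (t - c) ^ (kk.toNat) * G t, hrcase,
      ((analyticAt_id.sub analyticAt_const).pow _).mul hGan, ?_⟩
    filter_upwards [hKrep, self_mem_nhdsWithin] with t ht htc
    have hzp : (t - c : ℂ) ^ kk = (t - c) ^ (kk.toNat) := by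
      rw [← zpow_natCast, Int.toNat_of_nonneg hkk]
    have h : HB4 a1 a2 a3 a4 x y z w t + lam * (t - c)⁻¹
        = (t - c) ^ (kk.toNat) * G t := by rw [← hzp]; exact ht
    rw [div_eq_mul_inv]
    linear_combination h
end
end

section
/- Let α0,α1,α2,α3,α4 be complex numbers with α0+α1+2α2+2α3+2α4=1, let Ω ⊆ ℂ∖{0} be a nonempty connected open set, and let (x,y,z,w) be holomorphic functions on Ω satisfying the Sasano system B4(α0,α1,α2,α3,α4) on Ω. Then: (0) if y ≡ 1 on Ω then α0 = 0; (1) if y ≡ 0 on Ω then α1 = 0; (2) if x ≡ z on Ω then α2 = 0; (3) if w ≡ 0 on Ω then α3 = 0 or y ≡ 1/2 on Ω; (4) z ≡ 0 on Ω is impossible. -/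
open Filter Topology Polynomial

noncomputable section

/-- Basic rigidity properties of holomorphic solutions of the Sasano system `B₄⁽¹⁾` on a
nonempty connected open set `Ω ⊆ ℂ ∖ {0}`. -/
theorem B4_constant_component_constraints (a0 a1 a2 a3 a4 : ℂ)
    (hsum : a0 + a1 + 2*a2 + 2*a3 + 2*a4 = 1) (Ω : Set ℂ)
    (hopen : IsOpen Ω) (hconn : IsConnected Ω) (h0 : (0 : ℂ) ∉ Ω)
    (x y z w : ℂ → ℂ) (hsol : SolvesB4On a0 a1 a2 a3 a4 x y z w Ω) :
    ((∀ t ∈ Ω, y t = 1) → a0 = 0) ∧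
    ((∀ t ∈ Ω, y t = 0) → a1 = 0) ∧
    ((∀ t ∈ Ω, x t = z t) → a2 = 0) ∧
    ((∀ t ∈ Ω, w t = 0) → (a3 = 0 ∨ ∀ t ∈ Ω, y t = 1/2)) ∧
    ¬ (∀ t ∈ Ω, z t = 0) := by
  obtain ⟨t0, ht0⟩ := hconn.nonempty
  have hzne : ¬ ∀ t ∈ Ω, z t = 0 := by
    intro hz
    obtain ⟨_, _, _, _, _, _, e3, _⟩ := hsol t0 ht0
    have hdz : deriv z t0 = 0 := by
      have hev : z =ᶠ[𝓝 t0] fun _ => (0 : ℂ) :=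
        (hopen.eventually_mem ht0).mono fun u hu => hz u hu
      rw [hev.deriv_eq, deriv_const]
    rw [hz t0 ht0, hdz] at e3
    apply h0
    have : t0 = 0 := by linear_combination -e3
    exact this ▸ ht0
  refine ⟨?_, ?_, ?_, ?_, hzne⟩
  · intro hy
    obtain ⟨_, _, _, _, _, e2, _, _⟩ := hsol t0 ht0
    have hdy : deriv y t0 = 0 := by
      have hev : y =ᶠ[𝓝 t0] fun _ => (1 : ℂ) :=
        (hopen.eventually_mem ht0).mono fun u hu => hy u hu
      rw [hev.deriv_eq, deriv_const]
    rw [hy t0 ht0, hdy] at e2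
    linear_combination hsum + e2
  · intro hy
    obtain ⟨_, _, _, _, _, e2, _, _⟩ := hsol t0 ht0
    have hdy : deriv y t0 = 0 := by
      have hev : y =ᶠ[𝓝 t0] fun _ => (0 : ℂ) :=
        (hopen.eventually_mem ht0).mono fun u hu => hy u hu
      rw [hev.deriv_eq, deriv_const]
    rw [hy t0 ht0, hdy] at e2
    linear_combination -e2
  · intro hxz
    by_contra ha2
    apply hzne
    intro t ht
    obtain ⟨_, _, _, _, e1, _, e3, _⟩ := hsol t ht
    have hdx : deriv x t = deriv z t := by
      have hev : x =ᶠ[𝓝 t] z :=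
        (hopen.eventually_mem ht).mono fun u hu => hxz u hu
      exact hev.deriv_eq
    rw [hxz t ht, hdx] at e1
    have : a2 * z t = 0 := by linear_combination (e1 - e3) / 2
    rcases mul_eq_zero.mp this with h | h
    · exact absurd h ha2
    · exact h
  · intro hw
    by_cases ha3 : a3 = 0
    · exact Or.inl ha3
    · refine Or.inr fun t ht => ?_
      obtain ⟨_, _, _, _, _, _, _, e4⟩ := hsol t ht
      have hdw : deriv w t = 0 := by
        have hev : w =ᶠ[𝓝 t] fun _ => (0 : ℂ) :=
          (hopen.eventually_mem ht).mono fun u hu => hw u hu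
        rw [hev.deriv_eq, deriv_const]
      rw [hw t ht, hdw] at e4
      have h : a3 * (1 - 2 * y t) = 0 := by linear_combination -e4
      rcases mul_eq_zero.mp h with h | h
      · exact absurd h ha3
      · linear_combination -h / 2
end
end
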